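/- arXiv:1912.13154 — 3 statements merged into one kernel-verified Lean document; each statement's English description precedes it below -/
import Mathlib

section
/- Consider the error dynamics ṡ = −η s + f̃ with η > 0 under the monotonicity assumption (with function α(x, t) and constant D₁ > 0), together with the momentum adaptation law v̂̇ = −γ f̃(t) α(x(t), t), â̇ = β 𝒩(t)(v̂ − â), where 𝒩(t) = 1 + μ‖α(x(t), t)‖², γ, β > 0, and μ > γ D₁/β. Then all trajectories (x, â, v̂) remain bounded, f̃ ∈ L², (â − v̂) ∈ L², s ∈ L² ∩ L∞, s(t) → 0 as t → ∞, and x(t) → x_d(t). -/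
open MeasureTheory Filter
open scoped RealInnerProductSpace ENNReal

noncomputable section

/-- The signal `g` is square-integrable (`L²`) on `[0, ∞)`. -/
def InL2 {F : Type*} [NormedAddCommGroup F] (g : ℝ → F) : Prop :=
  ∫⁻ t in Set.Ici (0 : ℝ), ENNReal.ofReal (‖g t‖ ^ 2) < ⊤

/-- The signal `g` is bounded (`L∞`) on `[0, ∞)`. -/
def InLinf {F : Type*} [NormedAddCommGroup F] (g : ℝ → F) : Prop :=
  ∃ C : ℝ, ∀ t : ℝ, 0 ≤ t → ‖g t‖ ≤ C

lemma barbalat_aux (g : ℝ → ℝ) (K : ℝ)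
    (hnn : ∀ t, 0 ≤ t → 0 ≤ g t)
    (hlip : ∀ t₁ t₂ : ℝ, 0 ≤ t₁ → 0 ≤ t₂ → |g t₁ - g t₂| ≤ K * |t₁ - t₂|)
    (hfin : ∫⁻ t in Set.Ici (0:ℝ), ENNReal.ofReal (g t) < ⊤) :
    Tendsto g atTop (nhds 0) := by
  set K' : ℝ := |K| + 1 with hK'
  have hK'pos : (0:ℝ) < K' := by positivity
  have hlip' : ∀ t₁ t₂ : ℝ, 0 ≤ t₁ → 0 ≤ t₂ → |g t₁ - g t₂| ≤ K' * |t₁ - t₂| := by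
    intro t₁ t₂ h1 h2
    refine (hlip t₁ t₂ h1 h2).trans ?_
    have := abs_nonneg (t₁ - t₂)
    have := le_abs_self K
    nlinarith
  rw [Metric.tendsto_atTop]
  by_contra hcon
  push_neg at hcon
  obtain ⟨ε, hε, hbad⟩ := hcon
  set δ : ℝ := ε / (2 * K') with hδ
  have hδpos : 0 < δ := by positivity
  have hbad' : ∀ N : ℝ, ∃ t, max N 0 ≤ t ∧ ε ≤ g t := by
    intro N
    obtain ⟨t, ht, hd⟩ := hbad (max N 0)
    refine ⟨t, ht, ?_⟩
    rwa [Real.dist_eq, sub_zero, abs_of_nonneg (hnn t (le_trans (le_max_right _ _) ht))] at hd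
  choose T hT hgT using hbad'
  set u : ℕ → ℝ := fun m => Nat.rec (T 0) (fun _ prev => T (prev + δ)) m with hu
  have hu0 : ∀ m, 0 ≤ u m := by
    intro m
    cases m with
    | zero => exact le_trans (le_max_right _ _) (hT 0)
    | succ k => exact le_trans (le_max_right _ _) (hT _)
  have huS : ∀ m, u m + δ ≤ u (m+1) := fun m => le_trans (le_max_left _ _) (hT (u m + δ))
  have hgu : ∀ m, ε ≤ g (u m) := by
    intro m
    cases m with
    | zero => exact hgT 0
    | succ k => exact hgT _
  set c : ENNReal := ENNReal.ofReal (ε/2) * ENNReal.ofReal δ with hc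
  have hcpos : c ≠ 0 := by
    refine mul_ne_zero ?_ ?_ <;> simp [ENNReal.ofReal_eq_zero] <;> linarith
  have hcne : c ≠ ⊤ := by
    simp [hc, ENNReal.mul_eq_top]
  have key : ∀ m, c ≤ ∫⁻ t in Set.Ioc (u m) (u m + δ), ENNReal.ofReal (g t) := by
    intro m
    have h1 : ∫⁻ t in Set.Ioc (u m) (u m + δ), ENNReal.ofReal (ε/2)
        ≤ ∫⁻ t in Set.Ioc (u m) (u m + δ), ENNReal.ofReal (g t) := by
      apply lintegral_mono_ae
      filter_upwards [ae_restrict_mem measurableSet_Ioc] with t ht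
      apply ENNReal.ofReal_le_ofReal
      have ht0 : 0 ≤ t := le_trans (hu0 m) ht.1.le
      have h2 : |g t - g (u m)| ≤ K' * |t - u m| := hlip' t (u m) ht0 (hu0 m)
      have h3 : |t - u m| ≤ δ := by
        rw [abs_of_nonneg (by linarith [ht.1.le])]
        linarith [ht.2]
      have h4 : K' * δ = ε / 2 := by
        rw [hδ]; field_simp
      have h5 := abs_le.1 h2
      nlinarith [hgu m, mul_le_mul_of_nonneg_left h3 hK'pos.le]
    calc c = ENNReal.ofReal (ε/2) * volume (Set.Ioc (u m) (u m + δ)) := by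
            rw [Real.volume_Ioc]; norm_num; exact hc
      _ = ∫⁻ _ in Set.Ioc (u m) (u m + δ), ENNReal.ofReal (ε/2) := by
            rw [setLIntegral_const]
      _ ≤ _ := h1
  have grow : ∀ m : ℕ, ((m:ENNReal)+1) * c ≤ ∫⁻ t in Set.Icc 0 (u m + δ), ENNReal.ofReal (g t) := by
    intro m
    induction m with
    | zero =>
      have hsub : Set.Ioc (u 0) (u 0 + δ) ⊆ Set.Icc 0 (u 0 + δ) :=
        fun t ht => ⟨le_trans (hu0 0) ht.1.le, ht.2⟩
      simpa using le_trans (key 0) (lintegral_mono_set hsub)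
    | succ k ih =>
      have hsub : Set.Icc 0 (u k + δ) ∪ Set.Ioc (u (k+1)) (u (k+1) + δ) ⊆ Set.Icc 0 (u (k+1) + δ) := by
        intro t ht
        rcases ht with ht | ht
        · exact ⟨ht.1, le_trans ht.2 (by linarith [huS k, hδpos])⟩
        · exact ⟨le_trans (hu0 (k+1)) ht.1.le, ht.2⟩
      have hdisj : Disjoint (Set.Icc 0 (u k + δ)) (Set.Ioc (u (k+1)) (u (k+1) + δ)) := by
        rw [Set.disjoint_left]
        intro t ht1 ht2
        have := huS k
        have := ht1.2
        have := ht2.1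
        linarith
      push_cast
      calc ((k:ENNReal)+1+1) * c = ((k:ENNReal)+1)*c + c := by ring
        _ ≤ (∫⁻ t in Set.Icc 0 (u k + δ), ENNReal.ofReal (g t))
            + ∫⁻ t in Set.Ioc (u (k+1)) (u (k+1) + δ), ENNReal.ofReal (g t) :=
            add_le_add ih (key (k+1))
        _ = ∫⁻ t in Set.Icc 0 (u k + δ) ∪ Set.Ioc (u (k+1)) (u (k+1) + δ), ENNReal.ofReal (g t) :=
            (lintegral_union measurableSet_Ioc hdisj).symm
        _ ≤ _ := lintegral_mono_set hsub
  have hIle : ∀ m : ℕ, ((m:ENNReal)+1) * c ≤ ∫⁻ t in Set.Ici (0:ℝ), ENNReal.ofReal (g t) := by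
    intro m
    exact le_trans (grow m) (lintegral_mono_set (fun t ht => ht.1))
  set I := ∫⁻ t in Set.Ici (0:ℝ), ENNReal.ofReal (g t) with hI
  have hdivlt : I / c < ⊤ := ENNReal.div_lt_top hfin.ne hcpos
  obtain ⟨m, hm⟩ := ENNReal.exists_nat_gt hdivlt.ne
  have hmle : (m:ENNReal) ≤ I / c := by
    rw [ENNReal.le_div_iff_mul_le (Or.inl hcpos) (Or.inl hcne)]
    exact le_trans (mul_le_mul_left le_self_add c) (hIle m)
  exact absurd hmle (not_le.2 hm)

lemma lintegral_Ici_le_of_Icc (h : ℝ → ℝ) (C : ℝ)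
    (hmeas : AEMeasurable h (volume.restrict (Set.Ici (0:ℝ))))
    (hb : ∀ T : ℝ, 0 ≤ T → ∫⁻ t in Set.Icc (0:ℝ) T, ENNReal.ofReal (h t) ≤ ENNReal.ofReal C) :
    ∫⁻ t in Set.Ici (0:ℝ), ENNReal.ofReal (h t) ≤ ENNReal.ofReal C := by
  set G : ℝ → ENNReal := fun t => ENNReal.ofReal (h t) with hG
  set Fn : ℕ → ℝ → ENNReal := fun n t => (Set.Icc (0:ℝ) (n:ℝ)).indicator G t with hFn
  have hGmeas : AEMeasurable G (volume.restrict (Set.Ici (0:ℝ))) :=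
    ENNReal.measurable_ofReal.comp_aemeasurable hmeas
  have hFmeas : ∀ n, AEMeasurable (Fn n) (volume.restrict (Set.Ici (0:ℝ))) :=
    fun n => hGmeas.indicator measurableSet_Icc
  have hmono : ∀ᵐ t ∂(volume.restrict (Set.Ici (0:ℝ))), Monotone fun n => Fn n t := by
    filter_upwards with t
    intro i j hij
    exact Set.indicator_le_indicator_of_subset
      (Set.Icc_subset_Icc_right (by exact_mod_cast hij)) (fun _ => zero_le) t
  have hsup : ∀ᵐ t ∂(volume.restrict (Set.Ici (0:ℝ))), G t = ⨆ n, Fn n t := by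
    filter_upwards [ae_restrict_mem measurableSet_Ici] with t ht
    refine le_antisymm ?_ (iSup_le fun n => ?_)
    · exact le_iSup_of_le ⌈t⌉₊ (by rw [hFn]; simp only
        [Set.indicator_of_mem (Set.mem_Icc.2 ⟨ht, Nat.le_ceil t⟩)]; exact le_rfl)
    · by_cases hmem : t ∈ Set.Icc (0:ℝ) (n:ℝ)
      · rw [hFn]; simp only [Set.indicator_of_mem hmem]; exact le_rfl
      · rw [hFn]; simp only [Set.indicator_of_notMem hmem]; exact zero_le
  calc ∫⁻ t in Set.Ici (0:ℝ), G t = ∫⁻ t in Set.Ici (0:ℝ), ⨆ n, Fn n t :=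
        lintegral_congr_ae hsup
    _ = ⨆ n, ∫⁻ t in Set.Ici (0:ℝ), Fn n t := lintegral_iSup' hFmeas hmono
    _ ≤ ENNReal.ofReal C := by
        refine iSup_le fun n => ?_
        have h1 : ∫⁻ t in Set.Ici (0:ℝ), Fn n t
            = ∫⁻ t in Set.Icc (0:ℝ) (n:ℝ), G t := by
          rw [hFn, lintegral_indicator measurableSet_Icc,
            Measure.restrict_restrict measurableSet_Icc,
            Set.inter_eq_left.mpr (fun t ht => ht.1)]
        rw [h1]
        exact hb n (Nat.cast_nonneg n)

lemma scalar_key (γ β μ D₁ η S F X Y U W : ℝ)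
    (hγ : 0 < γ) (hβ : 0 < β) (hη : 0 < η) (hD₁ : 0 < D₁) (hμpos : 0 < μ)
    (hc : 0 < 1/D₁ - γ/(β*μ))
    (hF1 : (1/D₁)*F^2 ≤ F*X) (hCS : |Y| ≤ U*W) :
    (1/D₁ - γ/(β*μ))*η * (S * (-η*S + F)) - F*(X+Y) - F*Y - (β/γ)*(1+μ*W^2)*U^2
      ≤ -(((1/D₁ - γ/(β*μ))*η^2/2) * S^2 + ((1/D₁ - γ/(β*μ))/2) * F^2 + (β/γ)*U^2) := by
  have step1 : -(2*(F*Y)) ≤ 2*(|F| * (U*W)) := by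
    have h1 := abs_mul F Y
    have h2 := neg_abs_le (F*Y)
    have h3 := mul_le_mul_of_nonneg_left hCS (abs_nonneg F)
    linarith
  have step2 : 2*(|F| * (U*W)) ≤ (γ/(β*μ))*F^2 + (β*μ/γ)*(U*W)^2 := by
    have key : (γ/(β*μ))*F^2 + (β*μ/γ)*(U*W)^2 - 2*(|F| * (U*W))
        = (β*μ/γ)*((γ/(β*μ))*|F| - U*W)^2 := by
      field_simp; rw [← sq_abs F]; ring
    nlinarith [mul_nonneg (le_of_lt (show (0:ℝ) < β*μ/γ by positivity))
      (sq_nonneg ((γ/(β*μ))*|F| - U*W))]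
  have step3 : (1/D₁ - γ/(β*μ))*η*(S*F)
      ≤ ((1/D₁ - γ/(β*μ))/2)*F^2 + ((1/D₁ - γ/(β*μ))*η^2/2)*S^2 := by
    have key : ((1/D₁ - γ/(β*μ))/2)*F^2 + ((1/D₁ - γ/(β*μ))*η^2/2)*S^2
        - (1/D₁ - γ/(β*μ))*η*(S*F) = ((1/D₁ - γ/(β*μ))/2)*(F - η*S)^2 := by ring
    nlinarith [mul_nonneg (le_of_lt (show (0:ℝ) < (1/D₁ - γ/(β*μ))/2 by linarith))
      (sq_nonneg (F - η*S))]
  rw [← sub_nonneg]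
  have total : -(((1/D₁ - γ/(β*μ))*η^2/2) * S^2 + ((1/D₁ - γ/(β*μ))/2) * F^2 + (β/γ)*U^2)
      - ((1/D₁ - γ/(β*μ))*η * (S * (-η*S + F)) - F*(X+Y) - F*Y - (β/γ)*(1+μ*W^2)*U^2)
      = (2*(|F| * (U*W)) + 2*(F*Y))
        + ((γ/(β*μ))*F^2 + β*μ/γ*(U*W)^2 - 2*(|F| * (U*W)))
        + (((1/D₁ - γ/(β*μ))/2)*F^2 + ((1/D₁ - γ/(β*μ))*η^2/2)*S^2
            - (1/D₁ - γ/(β*μ))*η*(S*F))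
        + (F*X - (1/D₁)*F^2) := by ring
  rw [total]
  have s1 : 0 ≤ 2*(|F| * (U*W)) + 2*(F*Y) := by linarith [step1]
  have s2 : 0 ≤ (γ/(β*μ))*F^2 + β*μ/γ*(U*W)^2 - 2*(|F| * (U*W)) := by linarith [step2]
  have s3 : 0 ≤ ((1/D₁ - γ/(β*μ))/2)*F^2 + ((1/D₁ - γ/(β*μ))*η^2/2)*S^2
      - (1/D₁ - γ/(β*μ))*η*(S*F) := by linarith [step3]
  have s4 : 0 ≤ F*X - (1/D₁)*F^2 := by linarith [hF1]
  exact add_nonneg (add_nonneg (add_nonneg s1 s2) s3) s4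

set_option maxHeartbeats 2000000 in
/-- momentum adaptation law for nonlinearly parameterized dynamics
under the monotonicity assumption. -/
theorem momentum_adaptation_nonlinear
    {n p : ℕ}
    (x xd : ℝ → EuclideanSpace ℝ (Fin n))
    (s : ℝ → ℝ)
    (f : EuclideanSpace ℝ (Fin n) → EuclideanSpace ℝ (Fin p) → ℝ → ℝ)
    (α : EuclideanSpace ℝ (Fin n) → ℝ → EuclideanSpace ℝ (Fin p))
    (a : EuclideanSpace ℝ (Fin p))
    (ahat vhat : ℝ → EuclideanSpace ℝ (Fin p))
    (η γ β μ D₁ : ℝ)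
    (hη : 0 < η) (hγ : 0 < γ) (hβ : 0 < β) (hD₁ : 0 < D₁)
    (hμ : γ * D₁ / β < μ)
    -- monotonicity assumption
    (hmono₁ : ∀ (b : EuclideanSpace ℝ (Fin p)) (ξ : EuclideanSpace ℝ (Fin n)) (t : ℝ),
      0 ≤ t → 0 ≤ ⟪b - a, α ξ t⟫ * (f ξ b t - f ξ a t))
    (hmono₂ : ∀ (b : EuclideanSpace ℝ (Fin p)) (ξ : EuclideanSpace ℝ (Fin n)) (t : ℝ),
      0 ≤ t → (1 / D₁) * |f ξ b t - f ξ a t| ≤ |⟪α ξ t, b - a⟫|)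
    -- error dynamics ṡ = -η s + f̃
    (hs : ∀ t, 0 ≤ t →
      HasDerivAt s (-η * s t + (f (x t) (ahat t) t - f (x t) a t)) t)
    -- momentum adaptation law
    (hv : ∀ t, 0 ≤ t →
      HasDerivAt vhat (-((γ * (f (x t) (ahat t) t - f (x t) a t)) • α (x t) t)) t)
    (ha : ∀ t, 0 ≤ t →
      HasDerivAt ahat ((β * (1 + μ * ‖α (x t) t‖ ^ 2)) • (vhat t - ahat t)) t)
    -- f̃ is locally bounded in (x, â) uniformly in t
    (hfloc : ∀ R : ℝ, ∃ M : ℝ,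
      ∀ (ξ : EuclideanSpace ℝ (Fin n)) (b : EuclideanSpace ℝ (Fin p)) (t : ℝ),
        0 ≤ t → ‖ξ‖ ≤ R → ‖b‖ ≤ R → |f ξ b t - f ξ a t| ≤ M)
    -- boundedness of s implies boundedness of x
    (hsx : InLinf s → InLinf x)
    -- s → 0 implies x → x_d
    (hxd : Tendsto s atTop (nhds 0) →
      Tendsto (fun t => x t - xd t) atTop (nhds 0)) :
    InLinf x ∧ InLinf ahat ∧ InLinf vhat ∧
    InL2 (fun t => f (x t) (ahat t) t - f (x t) a t) ∧
    InL2 (fun t => ahat t - vhat t) ∧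
    (InL2 s ∧ InLinf s) ∧
    Tendsto s atTop (nhds 0) ∧
    Tendsto (fun t => x t - xd t) atTop (nhds 0) := by
  have hμpos : 0 < μ := lt_trans (by positivity) hμ
  have hγβμ : γ * D₁ < β * μ := by
    rw [div_lt_iff₀ hβ] at hμ; linarith
  have hcc : 0 < 1/D₁ - γ/(β*μ) := by
    rw [sub_pos, div_lt_div_iff₀ (by positivity) hD₁]
    linarith
  set c : ℝ := 1/D₁ - γ/(β*μ) with hcdef
  set ft : ℝ → ℝ := fun t => f (x t) (ahat t) t - f (x t) a t with hft
  set A : ℝ → EuclideanSpace ℝ (Fin p) := fun t => α (x t) t with hAdef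
  set ε : ℝ := c * η with hεdef
  have hεpos : 0 < ε := mul_pos hcc hη
  set V : ℝ → ℝ := fun t => ε/2 * (s t * s t) + (1/(2*γ)) * ‖vhat t - a‖^2
      + (1/(2*γ)) * ‖vhat t - ahat t‖^2 with hV
  set V' : ℝ → ℝ := fun t =>
      ε/2 * ((-η * s t + ft t) * s t + s t * (-η * s t + ft t))
      + (1/(2*γ)) * (2 * ⟪vhat t - a, -((γ * ft t) • A t)⟫)
      + (1/(2*γ)) * (2 * ⟪vhat t - ahat t,
          -((γ * ft t) • A t) - (β * (1 + μ * ‖A t‖^2)) • (vhat t - ahat t)⟫) with hV'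
  have hVd : ∀ t, 0 ≤ t → HasDerivAt V (V' t) t := by
    intro t ht
    have hst := hs t ht
    have hvt := hv t ht
    have hat := ha t ht
    have d1 : HasDerivAt (fun τ => ε/2 * (s τ * s τ))
        (ε/2 * ((-η * s t + ft t) * s t + s t * (-η * s t + ft t))) t :=
      (hst.mul hst).const_mul (ε/2)
    have d2 : HasDerivAt (fun τ => (1/(2*γ)) * ‖vhat τ - a‖^2)
        ((1/(2*γ)) * (2 * ⟪vhat t - a, -((γ * ft t) • A t)⟫)) t :=
      ((hvt.sub_const a).norm_sq).const_mul (1/(2*γ))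
    have d3 : HasDerivAt (fun τ => (1/(2*γ)) * ‖vhat τ - ahat τ‖^2)
        ((1/(2*γ)) * (2 * ⟪vhat t - ahat t,
          -((γ * ft t) • A t) - (β * (1 + μ * ‖A t‖^2)) • (vhat t - ahat t)⟫)) t :=
      ((hvt.sub hat).norm_sq).const_mul (1/(2*γ))
    exact (d1.add d2).add d3
  set H : ℝ → ℝ := fun t => (c*η^2/2) * (s t * s t) + (c/2) * (ft t)^2
      + (β/γ) * ‖vhat t - ahat t‖^2 with hH
  have hE : ∀ t, 0 ≤ t → V' t ≤ -H t := by
    intro t ht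
    have hexp : V' t = c*η * (s t * (-η * s t + ft t))
        - ft t * (⟪ahat t - a, A t⟫ + ⟪vhat t - ahat t, A t⟫)
        - ft t * ⟪vhat t - ahat t, A t⟫
        - (β/γ)*(1+μ*‖A t‖^2)*‖vhat t - ahat t‖^2 := by
      have e2 : (⟪vhat t - a, A t⟫ : ℝ) = ⟪ahat t - a, A t⟫ + ⟪vhat t - ahat t, A t⟫ := by
        rw [show vhat t - a = (ahat t - a) + (vhat t - ahat t) from by abel, inner_add_left]
      have e1 : (⟪vhat t - a, -((γ * ft t) • A t)⟫ : ℝ)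
          = -(γ * ft t * (⟪ahat t - a, A t⟫ + ⟪vhat t - ahat t, A t⟫)) := by
        rw [inner_neg_right, real_inner_smul_right, e2]
      have e3 : (⟪vhat t - ahat t,
            -((γ * ft t) • A t) - (β * (1 + μ * ‖A t‖^2)) • (vhat t - ahat t)⟫ : ℝ)
          = -(γ * ft t * ⟪vhat t - ahat t, A t⟫)
            - (β * (1 + μ * ‖A t‖^2)) * ‖vhat t - ahat t‖^2 := by
        rw [inner_sub_right, inner_neg_right, real_inner_smul_right, real_inner_smul_right,
          real_inner_self_eq_norm_sq]
      simp only [hV', hεdef]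
      rw [e1, e3]
      generalize (⟪ahat t - a, A t⟫ : ℝ) = X
      generalize (⟪vhat t - ahat t, A t⟫ : ℝ) = Y
      generalize (‖vhat t - ahat t‖^2 : ℝ) = U2
      generalize (‖A t‖^2 : ℝ) = W2
      field_simp
      ring
    have m1 : 0 ≤ ⟪ahat t - a, A t⟫ * ft t := hmono₁ (ahat t) (x t) t ht
    have m2 : (1/D₁) * |ft t| ≤ |⟪A t, ahat t - a⟫| := hmono₂ (ahat t) (x t) t ht
    rw [real_inner_comm] at m2
    have hF1 : (1/D₁) * (ft t)^2 ≤ ft t * ⟪ahat t - a, A t⟫ := by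
      calc (1/D₁) * (ft t)^2 = ((1/D₁) * |ft t|) * |ft t| := by rw [← sq_abs]; ring
        _ ≤ |⟪ahat t - a, A t⟫| * |ft t| := mul_le_mul_of_nonneg_right m2 (abs_nonneg _)
        _ = |⟪ahat t - a, A t⟫ * ft t| := (abs_mul _ _).symm
        _ = ⟪ahat t - a, A t⟫ * ft t := abs_of_nonneg m1
        _ = ft t * ⟪ahat t - a, A t⟫ := mul_comm _ _
    have hCS : |⟪vhat t - ahat t, A t⟫| ≤ ‖vhat t - ahat t‖ * ‖A t‖ :=
      abs_real_inner_le_norm _ _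
    have hkey := scalar_key γ β μ D₁ η (s t) (ft t) (⟪ahat t - a, A t⟫)
      (⟪vhat t - ahat t, A t⟫) ‖vhat t - ahat t‖ ‖A t‖ hγ hβ hη hD₁ hμpos
      (by rw [← hcdef]; exact hcc) hF1 hCS
    rw [← hcdef] at hkey
    calc V' t = _ := hexp
      _ ≤ -((c*η^2/2) * (s t)^2 + (c/2) * (ft t)^2 + (β/γ)*‖vhat t - ahat t‖^2) := hkey
      _ = -H t := by simp only [hH]; ring
  have hVcont : ContinuousOn V (Set.Ici 0) :=
    fun t ht => (hVd t ht).continuousAt.continuousWithinAt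
  have hk1 : 0 ≤ c*η^2/2 := div_nonneg (mul_nonneg hcc.le (sq_nonneg η)) (by norm_num)
  have hk2 : 0 ≤ c/2 := div_nonneg hcc.le (by norm_num)
  have hk3 : 0 ≤ β/γ := by positivity
  have hHnn : ∀ t, 0 ≤ H t := by
    intro t
    simp only [hH]
    have n1 := mul_nonneg hk1 (mul_self_nonneg (s t))
    have n2 := mul_nonneg hk2 (sq_nonneg (ft t))
    have n3 := mul_nonneg hk3 (sq_nonneg ‖vhat t - ahat t‖)
    linarith
  have hanti : AntitoneOn V (Set.Ici 0) := by
    apply antitoneOn_of_deriv_nonpos (convex_Ici 0) hVcont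
    · intro t ht
      rw [interior_Ici] at ht
      exact (hVd t ht.le).differentiableAt.differentiableWithinAt
    · intro t ht
      rw [interior_Ici] at ht
      rw [(hVd t ht.le).deriv]
      linarith [hE t ht.le, hHnn t]
  have hVnn : ∀ t, 0 ≤ V t := by
    intro t
    simp only [hV]
    have h1 : 0 ≤ ε/2 := by linarith
    have h2 : 0 ≤ 1/(2*γ) := by positivity
    nlinarith [mul_nonneg h1 (mul_self_nonneg (s t)), mul_nonneg h2 (sq_nonneg ‖vhat t - a‖),
      mul_nonneg h2 (sq_nonneg ‖vhat t - ahat t‖)]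
  have hVle : ∀ t, 0 ≤ t → V t ≤ V 0 := fun t ht => hanti Set.self_mem_Ici ht ht
  have hVle' : ∀ t, 0 ≤ t → ε/2 * (s t * s t) + (1/(2*γ)) * ‖vhat t - a‖^2
      + (1/(2*γ)) * ‖vhat t - ahat t‖^2 ≤ V 0 := fun t ht => hVle t ht
  have hV0 : 0 ≤ V 0 := hVnn 0
  clear_value c ε ft A V V' H
  have hgi : (0:ℝ) < 1/(2*γ) := by positivity
  have hsbE : ∃ Cs : ℝ, 0 ≤ Cs ∧ ∀ t, 0 ≤ t → |s t| ≤ Cs := by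
    refine ⟨Real.sqrt (2 * V 0 / ε), Real.sqrt_nonneg _, ?_⟩
    intro t ht
    have h1 := hVle' t ht
    have e1 : ε/2 * (s t * s t) ≤ V 0 := by
      linarith [mul_nonneg hgi.le (sq_nonneg ‖vhat t - a‖),
        mul_nonneg hgi.le (sq_nonneg ‖vhat t - ahat t‖)]
    have h2 : (s t)^2 ≤ 2 * V 0 / ε := by
      calc (s t)^2 = (2/ε) * (ε/2 * (s t * s t)) := by field_simp
        _ ≤ (2/ε) * V 0 := mul_le_mul_of_nonneg_left e1 (by positivity)
        _ = 2 * V 0 / ε := by ring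
    calc |s t| = Real.sqrt ((s t)^2) := (Real.sqrt_sq_eq_abs _).symm
      _ ≤ _ := Real.sqrt_le_sqrt h2
  obtain ⟨Cs, hCs0, hsb⟩ := hsbE
  have hvbE : ∃ Cv : ℝ, 0 ≤ Cv ∧ (∀ t, 0 ≤ t → ‖vhat t - a‖ ≤ Cv)
      ∧ (∀ t, 0 ≤ t → ‖vhat t - ahat t‖ ≤ Cv) := by
    refine ⟨Real.sqrt (2 * γ * V 0), Real.sqrt_nonneg _, ?_, ?_⟩
    · intro t ht
      have h1 := hVle' t ht
      have e1 : (1/(2*γ)) * ‖vhat t - a‖^2 ≤ V 0 := by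
        linarith [mul_nonneg (le_of_lt (by positivity : (0:ℝ) < ε/2)) (mul_self_nonneg (s t)),
          mul_nonneg hgi.le (sq_nonneg ‖vhat t - ahat t‖)]
      have h2 : ‖vhat t - a‖^2 ≤ 2 * γ * V 0 := by
        calc ‖vhat t - a‖^2 = (2*γ) * ((1/(2*γ)) * ‖vhat t - a‖^2) := by field_simp
          _ ≤ (2*γ) * V 0 := mul_le_mul_of_nonneg_left e1 (by positivity)
          _ = 2 * γ * V 0 := by ring
      calc ‖vhat t - a‖ = Real.sqrt (‖vhat t - a‖^2) := (Real.sqrt_sq (norm_nonneg _)).symm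
        _ ≤ _ := Real.sqrt_le_sqrt h2
    · intro t ht
      have h1 := hVle' t ht
      have e1 : (1/(2*γ)) * ‖vhat t - ahat t‖^2 ≤ V 0 := by
        linarith [mul_nonneg (le_of_lt (by positivity : (0:ℝ) < ε/2)) (mul_self_nonneg (s t)),
          mul_nonneg hgi.le (sq_nonneg ‖vhat t - a‖)]
      have h2 : ‖vhat t - ahat t‖^2 ≤ 2 * γ * V 0 := by
        calc ‖vhat t - ahat t‖^2 = (2*γ) * ((1/(2*γ)) * ‖vhat t - ahat t‖^2) := by field_simp
          _ ≤ (2*γ) * V 0 := mul_le_mul_of_nonneg_left e1 (by positivity)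
          _ = 2 * γ * V 0 := by ring
      calc ‖vhat t - ahat t‖ = Real.sqrt (‖vhat t - ahat t‖^2) :=
            (Real.sqrt_sq (norm_nonneg _)).symm
        _ ≤ _ := Real.sqrt_le_sqrt h2
  obtain ⟨Cv, hCv0, hwb, hub⟩ := hvbE
  have hsinf : InLinf s := ⟨Cs, fun t ht => by rw [Real.norm_eq_abs]; exact hsb t ht⟩
  have hxinf : InLinf x := hsx hsinf
  obtain ⟨Cx, hCx⟩ := hxinf
  have hvinf' : ∀ t, 0 ≤ t → ‖vhat t‖ ≤ ‖a‖ + Cv := by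
    intro t ht
    calc ‖vhat t‖ = ‖(vhat t - a) + a‖ := by rw [sub_add_cancel]
      _ ≤ ‖vhat t - a‖ + ‖a‖ := norm_add_le _ _
      _ ≤ ‖a‖ + Cv := by linarith [hwb t ht]
  have hainf' : ∀ t, 0 ≤ t → ‖ahat t‖ ≤ ‖a‖ + 2*Cv := by
    intro t ht
    calc ‖ahat t‖ = ‖vhat t - (vhat t - ahat t)‖ := by rw [sub_sub_cancel]
      _ ≤ ‖vhat t‖ + ‖vhat t - ahat t‖ := norm_sub_le _ _
      _ ≤ ‖a‖ + 2*Cv := by linarith [hvinf' t ht, hub t ht]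
  have hvinf : InLinf vhat := ⟨‖a‖ + Cv, hvinf'⟩
  have hainf : InLinf ahat := ⟨‖a‖ + 2*Cv, hainf'⟩
  obtain ⟨M, hM⟩ := hfloc (max Cx (‖a‖ + 2*Cv))
  have hftb : ∀ t, 0 ≤ t → |ft t| ≤ M := by
    intro t ht
    simp only [hft]
    exact hM (x t) (ahat t) t ht (le_trans (hCx t ht) (le_max_left _ _))
      (le_trans (hainf' t ht) (le_max_right _ _))
  have hM0 : 0 ≤ M := le_trans (abs_nonneg _) (hftb 0 le_rfl)
  -- measurability
  have hscont : ContinuousOn s (Set.Ici 0) :=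
    fun t ht => (hs t ht).continuousAt.continuousWithinAt
  have hsm : AEMeasurable s (volume.restrict (Set.Ici (0:ℝ))) :=
    hscont.aemeasurable measurableSet_Ici
  have hftm : AEMeasurable ft (volume.restrict (Set.Ici (0:ℝ))) := by
    have hg : AEMeasurable (fun t => deriv s t + η * s t) (volume.restrict (Set.Ici (0:ℝ))) :=
      (measurable_deriv s).aemeasurable.add (hsm.const_mul η)
    refine hg.congr ?_
    filter_upwards [ae_restrict_mem measurableSet_Ici] with t ht
    rw [(hs t ht).deriv]
    simp only [hft]
    ring
  have hucont : ContinuousOn (fun t => vhat t - ahat t) (Set.Ici 0) :=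
    fun t ht => ((hv t ht).sub (ha t ht)).continuousAt.continuousWithinAt
  have hum : AEMeasurable (fun t => vhat t - ahat t) (volume.restrict (Set.Ici (0:ℝ))) :=
    hucont.aemeasurable measurableSet_Ici
  have hHm : AEMeasurable H (volume.restrict (Set.Ici (0:ℝ))) := by
    rw [hH]
    exact ((((hsm.mul hsm).const_mul _).add ((hftm.pow_const 2).const_mul _)).add
      ((hum.norm.pow_const 2).const_mul _))
  set B : ℝ := (c*η^2/2)*Cs^2 + (c/2)*M^2 + (β/γ)*Cv^2 with hBdef
  clear_value B
  have hHb : ∀ t, 0 ≤ t → H t ≤ B := by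
    intro t ht
    simp only [hH, hBdef]
    have h1 : s t * s t ≤ Cs^2 := by
      have := hsb t ht
      nlinarith [abs_nonneg (s t), abs_mul_abs_self (s t)]
    have h2 : (ft t)^2 ≤ M^2 := by
      have := hftb t ht
      nlinarith [abs_nonneg (ft t), sq_abs (ft t)]
    have h3 : ‖vhat t - ahat t‖^2 ≤ Cv^2 := by
      have := hub t ht
      nlinarith [norm_nonneg (vhat t - ahat t)]
    linarith [mul_le_mul_of_nonneg_left h1 hk1, mul_le_mul_of_nonneg_left h2 hk2,
      mul_le_mul_of_nonneg_left h3 hk3]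
  have hIcc : ∀ T : ℝ, 0 ≤ T → IntegrableOn H (Set.Icc 0 T) volume := by
    intro T hT
    have h1 : IntegrableOn H (Set.Icc 0 T) (volume.restrict (Set.Ici (0:ℝ))) := by
      apply Measure.integrableOn_of_bounded (M := B)
      · exact ne_of_lt (lt_of_le_of_lt (Measure.restrict_apply_le _ _) measure_Icc_lt_top)
      · exact hHm.aestronglyMeasurable
      · rw [Measure.restrict_restrict measurableSet_Icc]
        filter_upwards [ae_restrict_mem (measurableSet_Icc.inter measurableSet_Ici)] with t htm
        rw [Real.norm_eq_abs, abs_of_nonneg (hHnn t)]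
        exact hHb t htm.2
    rwa [IntegrableOn, Measure.restrict_restrict measurableSet_Icc,
      Set.inter_eq_left.mpr (fun u hu => hu.1)] at h1
  have hbound : ∀ T : ℝ, 0 ≤ T →
      ∫⁻ t in Set.Icc (0:ℝ) T, ENNReal.ofReal (H t) ≤ ENNReal.ofReal (V 0) := by
    intro T hT
    have hint : ∫ t in (0:ℝ)..T, H t ≤ V 0 - V T := by
      have hres := intervalIntegral.integral_le_sub_of_hasDeriv_right_of_le hT
        (g := fun t => -V t) (g' := fun t => -V' t) (φ := H)
        ((hVcont.mono (Set.Icc_subset_Ici_self)).neg)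
        (fun u hu => ((hVd u hu.1.le).neg).hasDerivWithinAt)
        (hIcc T hT)
        (fun u hu => by show H u ≤ -V' u; linarith [hE u hu.1.le])
      have hres' : ∫ y in (0:ℝ)..T, H y ≤ -V T - -V 0 := hres
      linarith [hres']
    have hIoc : ∫⁻ t in Set.Icc (0:ℝ) T, ENNReal.ofReal (H t)
        = ENNReal.ofReal (∫ t in Set.Icc (0:ℝ) T, H t) := by
      rw [ofReal_integral_eq_lintegral_ofReal (hIcc T hT)
        ((ae_restrict_iff' measurableSet_Icc).2 (ae_of_all _ (fun t _ => hHnn t)))]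
    rw [hIoc]
    apply ENNReal.ofReal_le_ofReal
    have h2 : ∫ t in Set.Icc (0:ℝ) T, H t = ∫ t in (0:ℝ)..T, H t := by
      rw [intervalIntegral.integral_of_le hT, integral_Icc_eq_integral_Ioc]
    rw [h2]
    linarith [hVnn T, hint]
  have hItot : ∫⁻ t in Set.Ici (0:ℝ), ENNReal.ofReal (H t) ≤ ENNReal.ofReal (V 0) :=
    lintegral_Ici_le_of_Icc H (V 0) hHm hbound
  have hL2aux : ∀ (q : ℝ → ℝ) (k : ℝ), 0 < k → (∀ t, 0 ≤ t → k * q t ≤ H t) →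
      (∫⁻ t in Set.Ici (0:ℝ), ENNReal.ofReal (q t)) < ⊤ := by
    intro q k hk hqH
    have h1 : ∫⁻ t in Set.Ici (0:ℝ), ENNReal.ofReal (q t)
        ≤ ∫⁻ t in Set.Ici (0:ℝ), ENNReal.ofReal k⁻¹ * ENNReal.ofReal (H t) := by
      apply lintegral_mono_ae
      filter_upwards [ae_restrict_mem measurableSet_Ici] with t ht
      rw [← ENNReal.ofReal_mul (by positivity)]
      apply ENNReal.ofReal_le_ofReal
      calc q t = k⁻¹ * (k * q t) := by field_simp
        _ ≤ k⁻¹ * H t := mul_le_mul_of_nonneg_left (hqH t ht) (by positivity)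
    rw [lintegral_const_mul' _ _ ENNReal.ofReal_ne_top] at h1
    exact lt_of_le_of_lt h1 (ENNReal.mul_lt_top ENNReal.ofReal_lt_top
      (lt_of_le_of_lt hItot ENNReal.ofReal_lt_top))
  have hft2 : InL2 ft := by
    refine hL2aux (fun t => ‖ft t‖^2) (c/2) (by linarith) ?_
    intro t ht
    simp only [Real.norm_eq_abs, sq_abs, hH]
    linarith [mul_nonneg hk1 (mul_self_nonneg (s t)),
      mul_nonneg hk3 (sq_nonneg ‖vhat t - ahat t‖)]
  have hu2 : InL2 (fun t => ahat t - vhat t) := by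
    refine hL2aux (fun t => ‖ahat t - vhat t‖^2) (β/γ) (by positivity) ?_
    intro t ht
    show β/γ * ‖ahat t - vhat t‖^2 ≤ H t
    rw [norm_sub_rev]
    simp only [hH]
    linarith [mul_nonneg hk1 (mul_self_nonneg (s t)), mul_nonneg hk2 (sq_nonneg (ft t))]
  have hs2 : InL2 s := by
    refine hL2aux (fun t => ‖s t‖^2) (c*η^2/2) (by positivity) ?_
    intro t ht
    simp only [Real.norm_eq_abs, sq_abs, hH]
    have e1 : (s t)^2 = s t * s t := sq (s t)
    linarith [mul_nonneg hk2 (sq_nonneg (ft t)),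
      mul_nonneg hk3 (sq_nonneg ‖vhat t - ahat t‖)]
  -- Barbalat
  set L : ℝ := η*Cs + M with hLdef
  clear_value L
  have hL0 : 0 ≤ L := by rw [hLdef]; positivity
  have hslip : ∀ t₁ t₂ : ℝ, 0 ≤ t₁ → 0 ≤ t₂ → |s t₁ - s t₂| ≤ L * |t₁ - t₂| := by
    intro t₁ t₂ h1 h2
    have := Convex.norm_image_sub_le_of_norm_hasDerivWithin_le
      (f := s) (f' := fun t => -η * s t + ft t) (s := Set.Ici (0:ℝ)) (C := L)
      (fun u hu => by simp only [hft]; exact (hs u hu).hasDerivWithinAt)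
      (fun u hu => by
        show ‖-η * s u + ft u‖ ≤ L
        rw [Real.norm_eq_abs]
        have h8 : |(-η) * s u + ft u| ≤ |(-η) * s u| + |ft u| := abs_add_le _ _
        rw [abs_mul, abs_neg, abs_of_pos hη] at h8
        have h5 := hsb u hu
        have h6 := hftb u hu
        have h7 := abs_nonneg (s u)
        rw [hLdef]
        nlinarith [mul_le_mul_of_nonneg_left h5 hη.le])
      (convex_Ici 0) h2 h1
    simpa [Real.norm_eq_abs] using this
  have hglip : ∀ t₁ t₂ : ℝ, 0 ≤ t₁ → 0 ≤ t₂ →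
      |s t₁ * s t₁ - s t₂ * s t₂| ≤ (2*Cs*L) * |t₁ - t₂| := by
    intro t₁ t₂ h1 h2
    have hfactor : s t₁ * s t₁ - s t₂ * s t₂ = (s t₁ - s t₂) * (s t₁ + s t₂) := by ring
    have habs2 : |s t₁ + s t₂| ≤ 2*Cs :=
      (abs_add_le _ _).trans (by linarith [hsb t₁ h1, hsb t₂ h2])
    calc |s t₁ * s t₁ - s t₂ * s t₂| = |s t₁ - s t₂| * |s t₁ + s t₂| := by
          rw [hfactor, abs_mul]
      _ ≤ (L * |t₁ - t₂|) * (2*Cs) :=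
          mul_le_mul (hslip t₁ t₂ h1 h2) habs2 (abs_nonneg _) (by positivity)
      _ = (2*Cs*L) * |t₁ - t₂| := by ring
  have hs2fin : ∫⁻ t in Set.Ici (0:ℝ), ENNReal.ofReal (s t * s t) < ⊤ := by
    refine hL2aux (fun t => s t * s t) (c*η^2/2) (by positivity) ?_
    intro t ht
    simp only [hH]
    linarith [mul_nonneg hk2 (sq_nonneg (ft t)),
      mul_nonneg hk3 (sq_nonneg ‖vhat t - ahat t‖)]
  have hg0 : Tendsto (fun t => s t * s t) atTop (nhds 0) :=
    barbalat_aux _ (2*Cs*L) (fun t _ => mul_self_nonneg _) hglip hs2fin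
  have hsten : Tendsto s atTop (nhds 0) := by
    have h1 : Tendsto (fun t => Real.sqrt (s t * s t)) atTop (nhds 0) := by
      have := (Real.continuous_sqrt.tendsto 0).comp hg0
      simpa [Real.sqrt_zero, Function.comp_def] using this
    apply squeeze_zero_norm (fun t => ?_) h1
    rw [Real.norm_eq_abs]
    exact le_of_eq (Real.sqrt_mul_self_eq_abs (s t)).symm
  exact ⟨⟨Cx, hCx⟩, hainf, hvinf, hft ▸ hft2, hu2, ⟨hs2, hsinf⟩, hsten, hxd hsten⟩
end
end

section
/- Consider the linearly parameterized error dynamics ṡ = −η s + Y(t)(â − a) with η > 0, together with the elastic adaptation law â̇ = −P Y(t)ᵀ s + k(ā − â), ā̇ = k(â − ā), where P = Pᵀ > 0 is a constant positive definite matrix and k > 0. Then all trajectories (x, â, ā) remain bounded, s ∈ L² ∩ L∞, (â − ā) ∈ L², s(t) → 0 as t → ∞, and x(t) → x_d(t). -/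
open MeasureTheory Filter
open scoped RealInnerProductSpace ENNReal

noncomputable section

section aux
variable {p : ℕ}
local notation "E" => EuclideanSpace ℝ (Fin p)

lemma exists_inverse' (P : E →L[ℝ] E)
    (hPpos : ∀ v : E, v ≠ 0 → 0 < ⟪v, P v⟫) :
    ∃ Q : E →L[ℝ] E, (∀ v, P (Q v) = v) ∧ (∀ v, Q (P v) = v) := by
  have hinj : Function.Injective P.toLinearMap := by
    rw [← LinearMap.ker_eq_bot, LinearMap.ker_eq_bot']
    intro v hv
    by_contra hne
    have := hPpos v hne
    rw [show P.toLinearMap v = P v from rfl] at hv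
    rw [hv, inner_zero_right] at this
    exact lt_irrefl _ this
  have hbij : Function.Bijective P.toLinearMap :=
    ⟨hinj, (LinearMap.injective_iff_surjective).mp hinj⟩
  let e := LinearEquiv.ofBijective P.toLinearMap hbij
  refine ⟨LinearMap.toContinuousLinearMap e.symm.toLinearMap, fun v => ?_, fun v => ?_⟩
  · exact e.apply_symm_apply v
  · exact e.symm_apply_apply v

lemma coercive' (T : E →L[ℝ] E)
    (hpos : ∀ v : E, v ≠ 0 → 0 < ⟪v, T v⟫) :
    ∃ c : ℝ, 0 < c ∧ ∀ v : E, c * ‖v‖ ^ 2 ≤ ⟪v, T v⟫ := by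
  rcases (Metric.sphere (0:E) 1).eq_empty_or_nonempty with hS | hS
  · refine ⟨1, one_pos, fun v => ?_⟩
    have hv : v = 0 := by
      by_contra hv
      have : (‖v‖⁻¹ • v) ∈ Metric.sphere (0:E) 1 := by
        simp [norm_smul, abs_inv, inv_mul_cancel₀ (norm_ne_zero_iff.mpr hv),
          abs_of_nonneg (norm_nonneg v)]
      rw [hS] at this; exact this
    simp [hv]
  · have hc : ContinuousOn (fun v : E => ⟪v, T v⟫) (Metric.sphere 0 1) :=
      (continuous_id.inner (T.continuous)).continuousOn
    obtain ⟨w, hw, hwmin⟩ := (isCompact_sphere (0:E) 1).exists_isMinOn hS hc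
    have hw0 : w ≠ 0 := by
      intro h; rw [h] at hw; simp at hw
    refine ⟨⟪w, T w⟫, hpos w hw0, fun v => ?_⟩
    rcases eq_or_ne v 0 with rfl | hv
    · simp
    · have hnv : (0:ℝ) < ‖v‖ := norm_pos_iff.mpr hv
      have hmem : (‖v‖⁻¹ • v) ∈ Metric.sphere (0:E) 1 := by
        simp [norm_smul, abs_inv, inv_mul_cancel₀ hnv.ne', abs_of_nonneg (norm_nonneg v)]
      have hle : ⟪w, T w⟫ ≤ ⟪‖v‖⁻¹ • v, T (‖v‖⁻¹ • v)⟫ := hwmin hmem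
      have h2 : ⟪‖v‖⁻¹ • v, T (‖v‖⁻¹ • v)⟫ = ‖v‖⁻¹ * ‖v‖⁻¹ * ⟪v, T v⟫ := by
        rw [T.map_smul, real_inner_smul_left, real_inner_smul_right]; ring
      rw [h2] at hle
      have this := hle
      have h3 := mul_le_mul_of_nonneg_right this (le_of_lt (pow_pos hnv 2))
      have hcalc : ‖v‖⁻¹ * ‖v‖⁻¹ * ⟪v, T v⟫ * ‖v‖ ^ 2 = ⟪v, T v⟫ := by
        rw [sq, show ‖v‖⁻¹ * ‖v‖⁻¹ * ⟪v, T v⟫ * (‖v‖ * ‖v‖)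
            = (‖v‖⁻¹ * ‖v‖) * ((‖v‖⁻¹ * ‖v‖) * ⟪v, T v⟫) from by ring,
          inv_mul_cancel₀ hnv.ne']
        ring
      rw [hcalc] at h3
      exact h3
end aux


lemma lintegral_lt_top_of_bounded_integral (f : ℝ → ℝ) (B : ℝ)
    (hcont : ∀ t : ℝ, 0 ≤ t → ContinuousAt f t)
    (hnn : ∀ t, 0 ≤ f t)
    (hbd : ∀ T : ℝ, 0 ≤ T → (∫ u in (0:ℝ)..T, f u) ≤ B) :
    ∫⁻ t in Set.Ici (0:ℝ), ENNReal.ofReal (f t) < ⊤ := by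
  have hconOn : ∀ {b : ℝ}, ContinuousOn f (Set.Icc 0 b) := by
    intro b t ht
    exact (hcont t ht.1).continuousWithinAt
  have hIoc : ∀ m : ℕ, IntegrableOn f (Set.Ioc 0 (m:ℝ)) volume :=
    fun m => (hconOn.integrableOn_Icc).mono_set Set.Ioc_subset_Icc_self
  have hInt : IntegrableOn f (Set.Ioi 0) volume := by
    apply integrableOn_Ioi_of_intervalIntegral_norm_bounded B 0 hIoc
      tendsto_natCast_atTop_atTop
    filter_upwards with m
    have : (∫ u in (0:ℝ)..(m:ℝ), ‖f u‖) = ∫ u in (0:ℝ)..(m:ℝ), f u :=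
      intervalIntegral.integral_congr fun u _ => Real.norm_of_nonneg (hnn u)
    rw [this]
    exact hbd _ (Nat.cast_nonneg m)
  have hIci : IntegrableOn f (Set.Ici 0) volume :=
    Iff.mpr integrableOn_Ici_iff_integrableOn_Ioi hInt
  have hfin := hIci.2
  calc ∫⁻ t in Set.Ici (0:ℝ), ENNReal.ofReal (f t)
      = ∫⁻ t in Set.Ici (0:ℝ), ↑‖f t‖₊ := by
        apply lintegral_congr
        intro t
        rw [show (↑‖f t‖₊ : ℝ≥0∞) = ENNReal.ofReal ‖f t‖ from (ENNReal.ofReal_eq_coe_nnreal (norm_nonneg _)).symm, Real.norm_of_nonneg (hnn t)]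
    _ < ⊤ := hfin


lemma barbalat_sq (h : ℝ → ℝ) (L B : ℝ) (hL : 0 < L)
    (hnn : ∀ t, 0 ≤ t → 0 ≤ h t)
    (hlip : ∀ t u, 0 ≤ t → 0 ≤ u → |h u - h t| ≤ L * |u - t|)
    (hcont : ∀ t : ℝ, 0 ≤ t → ContinuousAt h t)
    (hbd : ∀ T : ℝ, 0 ≤ T → (∫ t in (0:ℝ)..T, h t) ≤ B) :
    Tendsto h atTop (nhds 0) := by
  have hconOn : ∀ {a b : ℝ}, 0 ≤ a → ContinuousOn h (Set.Icc a b) := by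
    intro a b ha t ht
    exact (hcont t (le_trans ha ht.1)).continuousWithinAt
  have hii : ∀ {a b : ℝ}, 0 ≤ a → a ≤ b → IntervalIntegrable h volume a b := by
    intro a b ha hab
    exact (hconOn ha).intervalIntegrable_of_Icc hab
  set F : ℝ → ℝ := fun T => ∫ t in (0:ℝ)..(max T 0), h t with hF
  have hadd : ∀ {a b : ℝ}, 0 ≤ a → a ≤ b →
      (∫ t in (0:ℝ)..a, h t) + (∫ t in a..b, h t) = ∫ t in (0:ℝ)..b, h t :=
    fun {a b} ha hab =>
      intervalIntegral.integral_add_adjacent_intervals (hii le_rfl ha) (hii ha hab)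
  have hmono : Monotone F := by
    intro T T' hTT'
    have h1 : (0:ℝ) ≤ max T 0 := le_max_right _ _
    have h2 : max T 0 ≤ max T' 0 := max_le_max hTT' le_rfl
    have := hadd h1 h2
    have hnn2 : 0 ≤ ∫ t in (max T 0)..(max T' 0), h t :=
      intervalIntegral.integral_nonneg h2 (fun u hu => hnn u (le_trans h1 hu.1))
    simp only [hF]
    linarith
  have hbdd : BddAbove (Set.range F) := by
    refine ⟨B, fun y hy => ?_⟩
    obtain ⟨T, rfl⟩ := hy
    exact hbd _ (le_max_right _ _)
  have hFtend : Tendsto F atTop (nhds (⨆ T, F T)) := tendsto_atTop_ciSup hmono hbdd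
  rw [Metric.tendsto_atTop]
  intro ε hε
  by_contra hcon
  push_neg at hcon
  set δ := ε / (2 * L) with hδ
  have hδpos : 0 < δ := div_pos hε (by linarith)
  -- Cauchy-type bound from convergence of F
  rw [Metric.tendsto_atTop] at hFtend
  obtain ⟨N, hN⟩ := hFtend (ε * δ / 4) (by positivity)
  obtain ⟨t, ht, htb⟩ := hcon (max N 0 + 1)
  have ht0 : (0:ℝ) ≤ t := le_trans (by positivity) ht
  have hht : ε ≤ h t := by
    have := hnn t ht0
    rw [Real.dist_eq, sub_zero, abs_of_nonneg this] at htb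
    exact htb
  -- h ≥ ε/2 on [t, t+δ]
  have hlower : ∀ u ∈ Set.Icc t (t + δ), ε / 2 ≤ h u := by
    intro u hu
    have h1 : |h u - h t| ≤ L * |u - t| := hlip t u ht0 (le_trans ht0 hu.1)
    have h2 : |u - t| ≤ δ := by
      rw [abs_of_nonneg (by linarith [hu.1])]; linarith [hu.2]
    have h3 : h t - h u ≤ L * δ := by
      have := abs_le.mp h1
      nlinarith [mul_le_mul_of_nonneg_left h2 hL.le]
    have hLδ : L * δ = ε / 2 := by
      rw [hδ]; field_simp
    linarith
  have hint : ε * δ / 2 ≤ ∫ u in t..(t + δ), h u := by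
    have := intervalIntegral.integral_mono_on (by linarith : t ≤ t + δ)
      (intervalIntegrable_const (c := ε / 2)) (hii ht0 (by linarith)) hlower
    rw [intervalIntegral.integral_const] at this
    calc ε * δ / 2 = (t + δ - t) • (ε / 2) := by rw [smul_eq_mul]; ring
      _ ≤ _ := this
  -- contradiction with Cauchy bound
  have hFt : F t = ∫ u in (0:ℝ)..t, h u := by
    simp only [hF, max_eq_left ht0]
  have hFtδ : F (t + δ) = ∫ u in (0:ℝ)..(t + δ), h u := by
    simp only [hF, max_eq_left (by linarith : (0:ℝ) ≤ t + δ)]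
  have hdiff : F (t + δ) - F t = ∫ u in t..(t + δ), h u := by
    rw [hFt, hFtδ, ← hadd ht0 (by linarith : t ≤ t + δ)]; ring
  have hN1 : dist (F t) (⨆ T, F T) < ε * δ / 4 := hN t (le_trans (le_max_left _ _) (by linarith))
  have hN2 : dist (F (t + δ)) (⨆ T, F T) < ε * δ / 4 :=
    hN (t + δ) (le_trans (le_max_left _ _) (by linarith))
  rw [Real.dist_eq] at hN1 hN2
  have : |F (t + δ) - F t| < ε * δ / 2 := by
    have := abs_sub_abs_le_abs_sub (F (t+δ) - (⨆ T, F T)) (F t - (⨆ T, F T))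
    have h4 : F (t + δ) - F t = (F (t+δ) - (⨆ T, F T)) - (F t - (⨆ T, F T)) := by ring
    rw [h4]
    calc |(F (t+δ) - (⨆ T, F T)) - (F t - (⨆ T, F T))|
        ≤ |F (t+δ) - (⨆ T, F T)| + |F t - (⨆ T, F T)| := abs_sub _ _
      _ < ε * δ / 2 := by linarith
  rw [hdiff] at this
  have := abs_lt.mp this
  linarith

/-- elastic modification of the Slotine–Li adaptation law.
The error dynamics `ṡ = -η s + Y(t)(â - a)` together with the elastic adaptation law
`â̇ = -P Y(t)ᵀ s + k(ā - â)`, `ā̇ = k(â - ā)`, `P = Pᵀ > 0`, `k > 0`, guarantees that all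
trajectories remain bounded, `s ∈ L² ∩ L∞`, `(â - ā) ∈ L²`, `s → 0` and `x → x_d`. -/
theorem elastic_adaptation_linear
    {n p : ℕ}
    (x xd : ℝ → EuclideanSpace ℝ (Fin n))
    (s : ℝ → ℝ)
    (Y : ℝ → EuclideanSpace ℝ (Fin p))
    (a : EuclideanSpace ℝ (Fin p))
    (ahat abar : ℝ → EuclideanSpace ℝ (Fin p))
    (P : EuclideanSpace ℝ (Fin p) →L[ℝ] EuclideanSpace ℝ (Fin p))
    (η k : ℝ)
    (hη : 0 < η) (hk : 0 < k)
    -- P is symmetric positive definite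
    (hPsym : ∀ v w : EuclideanSpace ℝ (Fin p), ⟪P v, w⟫ = ⟪v, P w⟫)
    (hPpos : ∀ v : EuclideanSpace ℝ (Fin p), v ≠ 0 → 0 < ⟪v, P v⟫)
    -- error dynamics ṡ = -η s + Y (â - a)
    (hs : ∀ t, 0 ≤ t → HasDerivAt s (-η * s t + ⟪Y t, ahat t - a⟫) t)
    -- elastic adaptation law
    (ha : ∀ t, 0 ≤ t →
      HasDerivAt ahat (-(P (s t • Y t)) + k • (abar t - ahat t)) t)
    (hb : ∀ t, 0 ≤ t → HasDerivAt abar (k • (ahat t - abar t)) t)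
    -- the regressor Y(x, t) is locally bounded in x uniformly in t
    (hYloc : ∀ R : ℝ, ∃ M : ℝ, ∀ t, 0 ≤ t → ‖x t‖ ≤ R → ‖Y t‖ ≤ M)
    -- boundedness of s implies boundedness of x
    (hsx : InLinf s → InLinf x)
    -- s → 0 implies x → x_d
    (hxd : Tendsto s atTop (nhds 0) →
      Tendsto (fun t => x t - xd t) atTop (nhds 0)) :
    InLinf x ∧ InLinf ahat ∧ InLinf abar ∧
    (InL2 s ∧ InLinf s) ∧
    InL2 (fun t => ahat t - abar t) ∧
    Tendsto s atTop (nhds 0) ∧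
    Tendsto (fun t => x t - xd t) atTop (nhds 0) := by
  obtain ⟨Q, hPQ, hQP⟩ := exists_inverse' P hPpos
  have hQsym : ∀ v w, ⟪Q v, w⟫ = ⟪v, Q w⟫ := by
    intro v w
    conv_lhs => rw [← hPQ w]
    rw [← hPsym, hPQ]
  have pairQ : ∀ v w, ⟪v, Q w⟫ = ⟪w, Q v⟫ := by
    intro v w; rw [← hQsym, real_inner_comm]
  have hQpos : ∀ v, v ≠ 0 → 0 < ⟪v, Q v⟫ := by
    intro v hv
    have hQv : Q v ≠ 0 := by
      intro h
      apply hv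
      rw [← hPQ v, h, map_zero]
    have h := hPpos (Q v) hQv
    rw [← hPsym, hPQ] at h
    exact h
  have hQnn : ∀ v, 0 ≤ ⟪v, Q v⟫ := by
    intro v
    rcases eq_or_ne v 0 with rfl | hv
    · simp
    · exact (hQpos v hv).le
  obtain ⟨c, hc, hcoer⟩ := coercive' Q hQpos
  set V : ℝ → ℝ := fun t =>
    s t ^ 2 + ⟪ahat t - a, Q (ahat t - a)⟫ + ⟪abar t - a, Q (abar t - a)⟫ with hVdef
  set g : ℝ → ℝ := fun t =>
    2 * η * s t ^ 2 + 2 * k * ⟪ahat t - abar t, Q (ahat t - abar t)⟫ with hgdef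
  -- derivative of V
  have hV : ∀ t, 0 ≤ t → HasDerivAt V (-g t) t := by
    intro t ht
    have hA : HasDerivAt (fun u => ahat u - a)
        (-(P (s t • Y t)) + k • (abar t - ahat t)) t := (ha t ht).sub_const a
    have hB : HasDerivAt (fun u => abar u - a) (k • (ahat t - abar t)) t :=
      (hb t ht).sub_const a
    have hQA : HasDerivAt (fun u => Q (ahat u - a))
        (Q (-(P (s t • Y t)) + k • (abar t - ahat t))) t :=
      Q.hasFDerivAt.comp_hasDerivAt t hA
    have hQB : HasDerivAt (fun u => Q (abar u - a)) (Q (k • (ahat t - abar t))) t :=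
      Q.hasFDerivAt.comp_hasDerivAt t hB
    have h1 := HasDerivAt.inner ℝ hA hQA
    have h2 := HasDerivAt.inner ℝ hB hQB
    have h0 := (hs t ht).pow 2
    have hsum := (h0.add h1).add h2
    convert hsum using 1
    · rfl
    · rfl
    · rfl
    -- scalar identity
    set A := ahat t - a with hAdef
    set B := abar t - a with hBdef
    set σ := s t
    set Yt := Y t
    have e1 : abar t - ahat t = B - A := by rw [hAdef, hBdef]; abel
    have e2 : ahat t - abar t = A - B := by rw [hAdef, hBdef]; abel
    rw [e1, e2]
    have hAexp : ⟪A, Q (-(P (σ • Yt)) + k • (B - A))⟫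
        = -(σ * ⟪Yt, A⟫) + k * ⟪A, Q B⟫ - k * ⟪A, Q A⟫ := by
      rw [_root_.map_add, _root_.map_neg, hQP, _root_.map_smul, _root_.map_sub,
        inner_add_right, inner_neg_right, real_inner_smul_right, real_inner_smul_right,
        inner_sub_right, real_inner_comm A Yt]
      ring
    have hA'exp : ⟪-(P (σ • Yt)) + k • (B - A), Q A⟫
        = -(σ * ⟪Yt, A⟫) + k * ⟪A, Q B⟫ - k * ⟪A, Q A⟫ := by
      rw [pairQ, hAexp]
    have hBexp : ⟪B, Q (k • (A - B))⟫ = k * ⟪A, Q B⟫ - k * ⟪B, Q B⟫ := by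
      rw [_root_.map_smul, _root_.map_sub, real_inner_smul_right, inner_sub_right,
        pairQ B A]
      ring
    have hB'exp : ⟪k • (A - B), Q B⟫ = k * ⟪A, Q B⟫ - k * ⟪B, Q B⟫ := by
      rw [pairQ, hBexp]
    have hgoal : g t = 2 * η * σ ^ 2 + 2 * k * ⟪A - B, Q (A - B)⟫ := by
      rw [hgdef]; simp only; rw [e2]
    have hdexp : ⟪A - B, Q (A - B)⟫
        = ⟪A, Q A⟫ - 2 * ⟪A, Q B⟫ + ⟪B, Q B⟫ := by
      rw [_root_.map_sub, inner_sub_left, inner_sub_right, inner_sub_right, pairQ B A]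
      ring
    rw [hgoal, hdexp, hAexp, hA'exp, hBexp, hB'exp]
    push_cast
    ring
  -- nonnegativity of g and V
  have hgnn : ∀ t, 0 ≤ g t := by
    intro t
    have h2 := hQnn (ahat t - abar t)
    have h1 : (0:ℝ) ≤ 2 * η * s t ^ 2 := by positivity
    simp only [hgdef]
    nlinarith [hk.le]
  have hVnn : ∀ t, 0 ≤ V t := by
    intro t
    have h1 := hQnn (ahat t - a)
    have h2 := hQnn (abar t - a)
    simp only [hVdef]
    nlinarith [sq_nonneg (s t)]
  -- V is antitone on [0, ∞)
  have hVcont : ContinuousOn V (Set.Ici 0) :=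
    fun t ht => (hV t ht).continuousAt.continuousWithinAt
  have hVanti : AntitoneOn V (Set.Ici 0) := by
    apply antitoneOn_of_deriv_nonpos (convex_Ici 0) hVcont
    · intro t ht
      rw [interior_Ici] at ht
      exact ((hV t ht.le).differentiableAt).differentiableWithinAt
    · intro t ht
      rw [interior_Ici] at ht
      rw [(hV t ht.le).deriv]
      exact neg_nonpos.mpr (hgnn t)
  have hVle : ∀ t, 0 ≤ t → V t ≤ V 0 :=
    fun t ht => hVanti Set.self_mem_Ici ht ht
  -- pointwise bounds
  have hsb : ∀ t, 0 ≤ t → s t ^ 2 ≤ V 0 := by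
    intro t ht
    have h1 := hQnn (ahat t - a)
    have h2 := hQnn (abar t - a)
    have h : s t ^ 2 ≤ V t := by simp only [hVdef]; linarith
    exact h.trans (hVle t ht)
  have hab : ∀ t, 0 ≤ t → c * ‖ahat t - a‖ ^ 2 ≤ V 0 := by
    intro t ht
    have h1 := hcoer (ahat t - a)
    have h2 := hQnn (abar t - a)
    have h3 := sq_nonneg (s t)
    have h : c * ‖ahat t - a‖ ^ 2 ≤ V t := by simp only [hVdef]; linarith
    exact h.trans (hVle t ht)
  have hbb : ∀ t, 0 ≤ t → c * ‖abar t - a‖ ^ 2 ≤ V 0 := by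
    intro t ht
    have h1 := hcoer (abar t - a)
    have h2 := hQnn (ahat t - a)
    have h3 := sq_nonneg (s t)
    have h : c * ‖abar t - a‖ ^ 2 ≤ V t := by simp only [hVdef]; linarith
    exact h.trans (hVle t ht)
  set Cs := Real.sqrt (V 0) with hCs
  have hCs0 : 0 ≤ Cs := Real.sqrt_nonneg _
  have hsC : ∀ t, 0 ≤ t → |s t| ≤ Cs := by
    intro t ht
    rw [← Real.sqrt_sq_eq_abs]
    exact Real.sqrt_le_sqrt (hsb t ht)
  have hsLinf : InLinf s := ⟨Cs, fun t ht => by rw [Real.norm_eq_abs]; exact hsC t ht⟩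
  set Ca := Real.sqrt (V 0 / c) with hCa
  have hCa0 : 0 ≤ Ca := Real.sqrt_nonneg _
  have haC : ∀ t, 0 ≤ t → ‖ahat t - a‖ ≤ Ca := by
    intro t ht
    have h2 : ‖ahat t - a‖ ^ 2 ≤ V 0 / c := (le_div_iff₀' hc).mpr (hab t ht)
    calc ‖ahat t - a‖ = Real.sqrt (‖ahat t - a‖ ^ 2) := (Real.sqrt_sq (norm_nonneg _)).symm
      _ ≤ Ca := Real.sqrt_le_sqrt h2
  have hbC : ∀ t, 0 ≤ t → ‖abar t - a‖ ≤ Ca := by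
    intro t ht
    have h2 : ‖abar t - a‖ ^ 2 ≤ V 0 / c := (le_div_iff₀' hc).mpr (hbb t ht)
    calc ‖abar t - a‖ = Real.sqrt (‖abar t - a‖ ^ 2) := (Real.sqrt_sq (norm_nonneg _)).symm
      _ ≤ Ca := Real.sqrt_le_sqrt h2
  have haLinf : InLinf ahat := by
    refine ⟨Ca + ‖a‖, fun t ht => ?_⟩
    calc ‖ahat t‖ = ‖(ahat t - a) + a‖ := by rw [sub_add_cancel]
      _ ≤ ‖ahat t - a‖ + ‖a‖ := norm_add_le _ _
      _ ≤ Ca + ‖a‖ := by linarith [haC t ht]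
  have hbLinf : InLinf abar := by
    refine ⟨Ca + ‖a‖, fun t ht => ?_⟩
    calc ‖abar t‖ = ‖(abar t - a) + a‖ := by rw [sub_add_cancel]
      _ ≤ ‖abar t - a‖ + ‖a‖ := norm_add_le _ _
      _ ≤ Ca + ‖a‖ := by linarith [hbC t ht]
  have hxLinf : InLinf x := hsx hsLinf
  obtain ⟨R, hR⟩ := hxLinf
  obtain ⟨MY, hMY⟩ := hYloc R
  have hMY' : ∀ t, 0 ≤ t → ‖Y t‖ ≤ MY := fun t ht => hMY t ht (hR t ht)
  have hMY0 : 0 ≤ MY := le_trans (norm_nonneg _) (hMY' 0 le_rfl)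
  -- continuity of g on [0, ∞)
  have hgcont : ∀ t, 0 ≤ t → ContinuousAt g t := by
    intro t ht
    have h1 := (hs t ht).continuousAt
    have h2 := (ha t ht).continuousAt
    have h3 := (hb t ht).continuousAt
    have hd : ContinuousAt (fun u => ahat u - abar u) t := h2.sub h3
    have hQd : ContinuousAt (fun u => Q (ahat u - abar u)) t :=
      Q.continuous.continuousAt.comp hd
    exact (continuousAt_const.mul (h1.pow 2)).add (continuousAt_const.mul (hd.inner hQd))
  have hii : ∀ {T : ℝ}, 0 ≤ T → IntervalIntegrable g volume 0 T := by
    intro T hT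
    apply ContinuousOn.intervalIntegrable
    intro u hu
    rw [Set.uIcc_of_le hT] at hu
    exact (hgcont u hu.1).continuousWithinAt
  -- FTC
  have hFTC : ∀ T, 0 ≤ T → (∫ u in (0:ℝ)..T, g u) = V 0 - V T := by
    intro T hT
    have h := intervalIntegral.integral_eq_sub_of_hasDerivAt
      (f := V) (f' := fun u => -g u)
      (fun u hu => hV u (by rw [Set.uIcc_of_le hT] at hu; exact hu.1)) ((hii hT).neg)
    rw [intervalIntegral.integral_neg] at h
    linarith [h]
  have hgle : ∀ T, 0 ≤ T → (∫ u in (0:ℝ)..T, g u) ≤ V 0 := by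
    intro T hT
    rw [hFTC T hT]
    linarith [hVnn T]
  -- L² bound for s
  have hs2g : ∀ u, s u ^ 2 ≤ (1 / (2 * η)) * g u := by
    intro u
    have h2 := hQnn (ahat u - abar u)
    have : 2 * η * s u ^ 2 ≤ g u := by
      simp only [hgdef]; nlinarith [hk.le]
    have h3 : s u ^ 2 = (1 / (2 * η)) * (2 * η * s u ^ 2) := by field_simp
    rw [h3]
    exact mul_le_mul_of_nonneg_left this (by positivity)
  have hs2bd : ∀ T, 0 ≤ T → (∫ u in (0:ℝ)..T, ‖s u‖ ^ 2) ≤ V 0 / (2 * η) := by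
    intro T hT
    have he : (∫ u in (0:ℝ)..T, ‖s u‖ ^ 2) = ∫ u in (0:ℝ)..T, s u ^ 2 :=
      intervalIntegral.integral_congr fun u _ => by rw [Real.norm_eq_abs, sq_abs]
    have hsint : IntervalIntegrable (fun u => s u ^ 2) volume 0 T := by
      apply ContinuousOn.intervalIntegrable
      intro u hu
      rw [Set.uIcc_of_le hT] at hu
      exact (((hs u hu.1).continuousAt).pow 2).continuousWithinAt
    have hmono := intervalIntegral.integral_mono_on hT hsint
      ((hii hT).const_mul (1 / (2 * η))) (fun u _ => hs2g u)
    rw [intervalIntegral.integral_const_mul] at hmono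
    rw [he]
    calc (∫ u in (0:ℝ)..T, s u ^ 2) ≤ (1 / (2 * η)) * ∫ u in (0:ℝ)..T, g u := hmono
      _ ≤ (1 / (2 * η)) * V 0 := by
          apply mul_le_mul_of_nonneg_left (hgle T hT) (by positivity)
      _ = V 0 / (2 * η) := by ring
  have hsL2 : InL2 s := by
    unfold InL2
    apply lintegral_lt_top_of_bounded_integral _ (V 0 / (2 * η))
    · intro t ht
      exact ((hs t ht).continuousAt.norm).pow 2
    · intro t; positivity
    · exact hs2bd
  -- L² bound for ahat - abar
  have hd2g : ∀ u, ‖ahat u - abar u‖ ^ 2 ≤ (1 / (2 * k * c)) * g u := by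
    intro u
    have h1 := hcoer (ahat u - abar u)
    have h2 : 2 * k * (c * ‖ahat u - abar u‖ ^ 2) ≤ g u := by
      simp only [hgdef]
      nlinarith [sq_nonneg (s u), hη.le, hk.le]
    have h3 : ‖ahat u - abar u‖ ^ 2
        = (1 / (2 * k * c)) * (2 * k * (c * ‖ahat u - abar u‖ ^ 2)) := by field_simp
    rw [h3]
    exact mul_le_mul_of_nonneg_left h2 (by positivity)
  have hd2bd : ∀ T, 0 ≤ T →
      (∫ u in (0:ℝ)..T, ‖ahat u - abar u‖ ^ 2) ≤ V 0 / (2 * k * c) := by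
    intro T hT
    have hdint : IntervalIntegrable (fun u => ‖ahat u - abar u‖ ^ 2) volume 0 T := by
      apply ContinuousOn.intervalIntegrable
      intro u hu
      rw [Set.uIcc_of_le hT] at hu
      exact ((((ha u hu.1).continuousAt.sub (hb u hu.1).continuousAt).norm).pow 2).continuousWithinAt
    have hmono := intervalIntegral.integral_mono_on hT hdint
      ((hii hT).const_mul (1 / (2 * k * c))) (fun u _ => hd2g u)
    rw [intervalIntegral.integral_const_mul] at hmono
    calc (∫ u in (0:ℝ)..T, ‖ahat u - abar u‖ ^ 2)
        ≤ (1 / (2 * k * c)) * ∫ u in (0:ℝ)..T, g u := hmono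
      _ ≤ (1 / (2 * k * c)) * V 0 := by
          apply mul_le_mul_of_nonneg_left (hgle T hT) (by positivity)
      _ = V 0 / (2 * k * c) := by ring
  have hdL2 : InL2 (fun t => ahat t - abar t) := by
    unfold InL2
    apply lintegral_lt_top_of_bounded_integral _ (V 0 / (2 * k * c))
    · intro t ht
      exact (((ha t ht).continuousAt.sub (hb t ht).continuousAt).norm).pow 2
    · intro t; positivity
    · exact hd2bd
  -- Barbalat: s² → 0
  set L : ℝ := 2 * Cs * (η * Cs + MY * Ca) + 1 with hLdef
  have hL : 0 < L := by positivity
  have hderivbd : ∀ v ∈ Set.Ici (0:ℝ),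
      ‖(2:ℝ) * s v * (-η * s v + ⟪Y v, ahat v - a⟫)‖ ≤ L := by
    intro v hv
    have h1 := hsC v hv
    have h2 := hMY' v hv
    have h3 := haC v hv
    have h4 : |(⟪Y v, ahat v - a⟫ : ℝ)| ≤ MY * Ca := by
      calc |(⟪Y v, ahat v - a⟫ : ℝ)| ≤ ‖Y v‖ * ‖ahat v - a‖ := abs_real_inner_le_norm _ _
        _ ≤ MY * Ca := mul_le_mul h2 h3 (norm_nonneg _) hMY0
    have h5 : |(-η * s v + ⟪Y v, ahat v - a⟫ : ℝ)| ≤ η * Cs + MY * Ca := by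
      calc |(-η * s v + ⟪Y v, ahat v - a⟫ : ℝ)|
          ≤ |(-η * s v : ℝ)| + |(⟪Y v, ahat v - a⟫ : ℝ)| := abs_add_le _ _
        _ ≤ η * Cs + MY * Ca := by
            rw [abs_mul, abs_neg, abs_of_pos hη]
            have := mul_le_mul_of_nonneg_left h1 hη.le
            linarith
    rw [Real.norm_eq_abs, abs_mul, abs_mul]
    have habs : |s v| * |(-η * s v + ⟪Y v, ahat v - a⟫ : ℝ)| ≤ Cs * (η * Cs + MY * Ca) :=
      mul_le_mul h1 h5 (abs_nonneg _) hCs0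
    have h2abs : |(2:ℝ)| = 2 := by norm_num
    rw [h2abs, hLdef]
    nlinarith
  have hlip : ∀ t u, 0 ≤ t → 0 ≤ u → |s u ^ 2 - s t ^ 2| ≤ L * |u - t| := by
    intro t u ht hu
    have key := Convex.norm_image_sub_le_of_norm_hasDerivWithin_le
      (f := fun v => s v ^ 2)
      (f' := fun v => (2:ℝ) * s v * (-η * s v + ⟪Y v, ahat v - a⟫))
      (s := Set.Ici (0:ℝ)) (C := L)
      (fun v hv => by
        have h := ((hs v hv).pow 2).hasDerivWithinAt (s := Set.Ici (0:ℝ))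
        convert h using 1
        · rfl
        push_cast
        ring)
      hderivbd (convex_Ici 0) ht hu
    simpa [Real.norm_eq_abs] using key
  have hsqtend : Tendsto (fun t => s t ^ 2) atTop (nhds 0) := by
    apply barbalat_sq _ L (V 0 / (2 * η)) hL
    · intro t _; positivity
    · exact hlip
    · intro t ht; exact ((hs t ht).continuousAt).pow 2
    · intro T hT
      have he : (∫ u in (0:ℝ)..T, s u ^ 2) = ∫ u in (0:ℝ)..T, ‖s u‖ ^ 2 :=
        intervalIntegral.integral_congr fun u _ => by rw [Real.norm_eq_abs, sq_abs]
      rw [he]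
      exact hs2bd T hT
  have hstend : Tendsto s atTop (nhds 0) := by
    have h1 : Tendsto (fun t => Real.sqrt (s t ^ 2)) atTop (nhds 0) := by
      have := (Real.continuous_sqrt.tendsto 0).comp hsqtend
      rwa [Real.sqrt_zero] at this
    have h2 : Tendsto (fun t => -Real.sqrt (s t ^ 2)) atTop (nhds 0) := by
      have := h1.neg
      rwa [neg_zero] at this
    apply tendsto_of_tendsto_of_tendsto_of_le_of_le h2 h1
    · intro t
      simp only [Real.sqrt_sq_eq_abs]
      exact neg_abs_le _
    · intro t
      simp only [Real.sqrt_sq_eq_abs]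
      exact le_abs_self _
  exact ⟨hsx hsLinf, haLinf, hbLinf, ⟨hsL2, hsLinf⟩, hdL2, hstend, hxd hstend⟩

end
end

section
/- Consider the error dynamics ṡ = −η s + f̃ with η > 0 under the monotonicity assumption (with function α(x, t) and constant D₁ > 0), together with the elastic adaptation law â̇ = −f̃ P α(x(t), t) + k(ā − â), ā̇ = k(â − ā), where P = Pᵀ > 0 and k > 0. Then all trajectories (x, â, ā) remain bounded, f̃ ∈ L² ∩ L∞, (â − ā) ∈ L², s ∈ L∞ ∩ L², s(t) → 0 as t → ∞, and x(t) → x_d(t). -/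
open MeasureTheory Filter
open scoped RealInnerProductSpace ENNReal

noncomputable section

section AuxLemmas

/-- An inverse for a symmetric positive definite operator, with coercivity. -/
lemma exists_inv {p : ℕ} (P : EuclideanSpace ℝ (Fin p) →L[ℝ] EuclideanSpace ℝ (Fin p))
    (hPsym : ∀ v w : EuclideanSpace ℝ (Fin p), ⟪P v, w⟫ = ⟪v, P w⟫)
    (hPpos : ∀ v : EuclideanSpace ℝ (Fin p), v ≠ 0 → 0 < ⟪v, P v⟫) :
    ∃ Q : EuclideanSpace ℝ (Fin p) →L[ℝ] EuclideanSpace ℝ (Fin p),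
      (∀ v, Q (P v) = v) ∧ (∀ v, P (Q v) = v) ∧ (∀ v w, ⟪Q v, w⟫ = ⟪v, Q w⟫) ∧
      ∃ c : ℝ, 0 < c ∧ ∀ v, c * ‖v‖ ^ 2 ≤ ⟪v, Q v⟫ := by
  have hinj : Function.Injective P.toLinearMap := by
    rw [← LinearMap.ker_eq_bot, LinearMap.ker_eq_bot']
    intro v hv
    by_contra hne
    have := hPpos v hne
    rw [show P v = 0 from hv] at this
    simp at this
  have hbij : Function.Bijective P.toLinearMap :=
    ⟨hinj, (LinearMap.injective_iff_surjective).mp hinj⟩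
  let e : EuclideanSpace ℝ (Fin p) ≃ₗ[ℝ] EuclideanSpace ℝ (Fin p) :=
    LinearEquiv.ofBijective P.toLinearMap hbij
  let Q : EuclideanSpace ℝ (Fin p) →L[ℝ] EuclideanSpace ℝ (Fin p) :=
    LinearMap.toContinuousLinearMap (e.symm : _ →ₗ[ℝ] _)
  have hQP : ∀ v, Q (P v) = v := fun v => e.symm_apply_apply v
  have hPQ : ∀ v, P (Q v) = v := fun v => e.apply_symm_apply v
  have hQsym : ∀ v w, ⟪Q v, w⟫ = ⟪v, Q w⟫ := by
    intro v w
    calc ⟪Q v, w⟫ = ⟪Q v, P (Q w)⟫ := by rw [hPQ]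
      _ = ⟪P (Q v), Q w⟫ := (hPsym _ _).symm
      _ = ⟪v, Q w⟫ := by rw [hPQ]
  have hQpos : ∀ v : EuclideanSpace ℝ (Fin p), v ≠ 0 → 0 < ⟪v, Q v⟫ := by
    intro v hv
    have hQv : Q v ≠ 0 := by
      intro h
      apply hv; rw [← hPQ v, h, map_zero]
    have := hPpos (Q v) hQv
    rw [hPQ v, real_inner_comm] at this
    exact this
  refine ⟨Q, hQP, hPQ, hQsym, ?_⟩
  by_cases hsub : Subsingleton (EuclideanSpace ℝ (Fin p))
  · refine ⟨1, one_pos, fun v => ?_⟩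
    have : v = 0 := Subsingleton.elim v 0
    simp [this]
  · have : Nontrivial (EuclideanSpace ℝ (Fin p)) := not_subsingleton_iff_nontrivial.mp hsub
    have hne : (Metric.sphere (0 : EuclideanSpace ℝ (Fin p)) 1).Nonempty :=
      NormedSpace.sphere_nonempty.mpr zero_le_one
    have hcont : ContinuousOn (fun v : EuclideanSpace ℝ (Fin p) => ⟪v, Q v⟫)
        (Metric.sphere 0 1) :=
      (continuous_id.inner Q.continuous).continuousOn
    obtain ⟨v0, hv0, hmin'⟩ :=
      (isCompact_sphere (0 : EuclideanSpace ℝ (Fin p)) 1).exists_isMinOn hne hcont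
    have hmin : ∀ u ∈ Metric.sphere (0 : EuclideanSpace ℝ (Fin p)) 1, ⟪v0, Q v0⟫ ≤ ⟪u, Q u⟫ :=
      fun u hu => hmin' hu
    have hv0norm : ‖v0‖ = 1 := by simpa using hv0
    have hv0ne : v0 ≠ 0 := by intro h; rw [h] at hv0norm; simp at hv0norm
    refine ⟨⟪v0, Q v0⟫, hQpos v0 hv0ne, fun v => ?_⟩
    by_cases hv : v = 0
    · simp [hv]
    · have hnv : ‖v‖ ≠ 0 := norm_ne_zero_iff.mpr hv
      set u : EuclideanSpace ℝ (Fin p) := ‖v‖⁻¹ • v with hu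
      have hus : u ∈ Metric.sphere (0 : EuclideanSpace ℝ (Fin p)) 1 := by
        simp [hu, norm_smul, abs_of_nonneg (inv_nonneg.mpr (norm_nonneg v)),
          inv_mul_cancel₀ hnv]
      have h1 := hmin u hus
      have h2 : ⟪u, Q u⟫ = ‖v‖⁻¹ * (‖v‖⁻¹ * ⟪v, Q v⟫) := by
        rw [hu, Q.map_smul, real_inner_smul_left, real_inner_smul_right]
      have h3 : (0:ℝ) < ‖v‖ := norm_pos_iff.mpr hv
      rw [h2] at h1
      have h4 := mul_le_mul_of_nonneg_left h1 (le_of_lt (mul_pos h3 h3))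
      have heq : ‖v‖ * ‖v‖ * (‖v‖⁻¹ * (‖v‖⁻¹ * ⟪v, Q v⟫)) = ⟪v, Q v⟫ := by
        field_simp
      calc ⟪v0, Q v0⟫ * ‖v‖ ^ 2 = ‖v‖ * ‖v‖ * ⟪v0, Q v0⟫ := by ring
        _ ≤ ‖v‖ * ‖v‖ * (‖v‖⁻¹ * (‖v‖⁻¹ * ⟪v, Q v⟫)) := h4
        _ = ⟪v, Q v⟫ := heq

/-- A bound on the `lintegral` over `[0,∞)` follows from bounds on `(0, n)`. -/
lemma lint_Ici_le {g : ℝ → ℝ} {C : ℝ≥0∞}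
    (h : ∀ nn : ℕ, ∫⁻ t in Set.Ioo (0:ℝ) nn, ENNReal.ofReal (g t) ≤ C) :
    ∫⁻ t in Set.Ici (0:ℝ), ENNReal.ofReal (g t) ≤ C := by
  have h0 : (volume : Measure ℝ).restrict (Set.Ici 0) = volume.restrict (Set.Ioi 0) :=
    Measure.restrict_congr_set Ioi_ae_eq_Ici.symm
  rw [h0]
  set ν := volume.withDensity (fun t => ENNReal.ofReal (g t)) with hν
  have happ : ∀ S : Set ℝ, MeasurableSet S → ν S = ∫⁻ t in S, ENNReal.ofReal (g t) :=
    fun S hS => withDensity_apply _ hS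
  rw [← happ _ measurableSet_Ioi]
  have hU : Set.Ioi (0:ℝ) = ⋃ nn : ℕ, Set.Ioo (0:ℝ) nn := by
    ext t; simp only [Set.mem_Ioi, Set.mem_iUnion, Set.mem_Ioo]
    constructor
    · intro ht; obtain ⟨nn, hn⟩ := exists_nat_gt t; exact ⟨nn, ht, hn⟩
    · rintro ⟨nn, ht, _⟩; exact ht
  have hmono : Monotone (fun nn : ℕ => Set.Ioo (0:ℝ) nn) := by
    intro i j hij
    exact Set.Ioo_subset_Ioo le_rfl (by exact_mod_cast hij)
  rw [hU, hmono.measure_iUnion]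
  exact iSup_le fun nn => by rw [happ _ measurableSet_Ioo]; exact h nn

lemma lint_le_of_le_integrable {g W : ℝ → ℝ} {K C : ℝ} (hK : 0 ≤ K) {S : Set ℝ}
    (hS : MeasurableSet S) (hint : IntegrableOn W S)
    (hle : ∀ t ∈ S, g t ≤ K * W t) (hWnn : ∀ t ∈ S, 0 ≤ W t)
    (hC : ∫ t in S, W t ≤ C) :
    ∫⁻ t in S, ENNReal.ofReal (g t) ≤ ENNReal.ofReal (K * C) := by
  have h1 : ∫⁻ t in S, ENNReal.ofReal (g t)
      ≤ ∫⁻ t in S, ENNReal.ofReal K * ENNReal.ofReal (W t) := by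
    apply lintegral_mono_ae
    filter_upwards [ae_restrict_mem hS] with t ht
    rw [← ENNReal.ofReal_mul hK]
    exact ENNReal.ofReal_le_ofReal (hle t ht)
  have h2 : ∫⁻ t in S, ENNReal.ofReal K * ENNReal.ofReal (W t)
      = ENNReal.ofReal K * ∫⁻ t in S, ENNReal.ofReal (W t) :=
    lintegral_const_mul' _ _ ENNReal.ofReal_ne_top
  have h3 : ∫⁻ t in S, ENNReal.ofReal (W t) = ENNReal.ofReal (∫ t in S, W t) := by
    rw [ofReal_integral_eq_lintegral_ofReal hint]
    filter_upwards [ae_restrict_mem hS] with t ht using hWnn t ht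
  rw [h2, h3] at h1
  refine h1.trans ?_
  rw [ENNReal.ofReal_mul hK]
  exact mul_le_mul_right (ENNReal.ofReal_le_ofReal hC) _

/-- Barbalat-type lemma: a Lipschitz (on `[0,∞)`) square-integrable signal tends to zero. -/
lemma barbalat {s : ℝ → ℝ} {L : ℝ} (hL : 0 < L)
    (hcont : ContinuousOn s (Set.Ici 0))
    (hlip : ∀ t u : ℝ, 0 ≤ t → 0 ≤ u → |s u - s t| ≤ L * |u - t|)
    (hL2 : ∫⁻ t in Set.Ici (0:ℝ), ENNReal.ofReal (s t ^ 2) < ⊤) :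
    Tendsto s atTop (nhds 0) := by
  set sM : ℝ → ℝ := fun t => s (max t 0) with hsM
  have hsMc : Continuous sM := by
    apply hcont.comp_continuous (continuous_id.max continuous_const)
    intro t; exact Set.mem_Ici.mpr (le_max_right t 0)
  set F : ℝ → ℝ≥0∞ := fun t => ENNReal.ofReal (sM t ^ 2) with hF
  set ν := (volume.restrict (Set.Ici (0:ℝ))).withDensity F with hν
  have happ : ∀ S : Set ℝ, MeasurableSet S →
      ν S = ∫⁻ t in S, F t ∂(volume.restrict (Set.Ici (0:ℝ))) :=
    fun S hS => withDensity_apply _ hS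
  have hνIci : ν (Set.Ici (0:ℝ)) ≠ ⊤ := by
    rw [happ _ measurableSet_Ici, Measure.restrict_restrict measurableSet_Ici, Set.inter_self]
    have : ∫⁻ t in Set.Ici (0:ℝ), F t = ∫⁻ t in Set.Ici (0:ℝ), ENNReal.ofReal (s t ^ 2) := by
      apply lintegral_congr_ae
      filter_upwards [ae_restrict_mem measurableSet_Ici] with t ht
      simp only [hF, hsM, max_eq_left (Set.mem_Ici.mp ht)]
    rw [this]; exact hL2.ne
  by_contra hnot
  rw [Metric.tendsto_atTop] at hnot
  push_neg at hnot
  obtain ⟨ε, hε, hbad⟩ := hnot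
  set w : ℝ := ε / (2 * L) with hw
  have hwpos : 0 < w := div_pos hε (by linarith)
  set δ : ℝ≥0∞ := ENNReal.ofReal (ε ^ 2 / 4) * ENNReal.ofReal w with hδ
  have hδpos : 0 < δ :=
    ENNReal.mul_pos (ENNReal.ofReal_pos.mpr (by positivity)).ne'
      (ENNReal.ofReal_pos.mpr hwpos).ne'
  have htail : Tendsto (fun nn : ℕ => ν (Set.Ici (nn : ℝ))) atTop (nhds 0) := by
    have h1 : Tendsto (ν ∘ fun nn : ℕ => Set.Ici (nn : ℝ)) atTop
        (nhds (ν (⋂ nn : ℕ, Set.Ici (nn : ℝ)))) := by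
      apply tendsto_measure_iInter_atTop
      · exact fun i => (measurableSet_Ici).nullMeasurableSet
      · intro i j hij; exact Set.Ici_subset_Ici.mpr (by exact_mod_cast hij)
      · exact ⟨0, by simpa using hνIci⟩
    have h2 : (⋂ nn : ℕ, Set.Ici ((nn : ℝ))) = ∅ := by
      ext t
      simp only [Set.mem_iInter, Set.mem_Ici, Set.mem_empty_iff_false, iff_false, not_forall]
      obtain ⟨nn, hn⟩ := exists_nat_gt t
      exact ⟨nn, not_le.mpr hn⟩
    rw [h2] at h1; simpa [Function.comp_def] using h1
  obtain ⟨N, hN⟩ := (htail.eventually_lt_const hδpos).exists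
  obtain ⟨t, htN, htb⟩ := hbad (N : ℝ)
  have ht0 : (0:ℝ) ≤ t := le_trans (Nat.cast_nonneg N) htN
  have hsb : ε ≤ |s t| := by simpa [Real.dist_eq] using htb
  have hbump : ∀ τ ∈ Set.Icc t (t + w), ε/2 ≤ |s τ| := by
    intro τ hτ
    have hτ0 : 0 ≤ τ := le_trans ht0 hτ.1
    have hd : |s τ - s t| ≤ L * |τ - t| := hlip t τ ht0 hτ0
    have h1 : |τ - t| ≤ w := by
      rw [abs_of_nonneg (by linarith [hτ.1])]
      linarith [hτ.2]
    have h2 : L * |τ - t| ≤ L * w := mul_le_mul_of_nonneg_left h1 hL.le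
    have h3 : L * w = ε / 2 := by
      rw [hw]; field_simp
    have h5 := abs_sub_abs_le_abs_sub (s t) (s τ)
    rw [abs_sub_comm (s t) (s τ)] at h5
    linarith [hd, h5]
  have hsub1 : Set.Icc t (t + w) ⊆ Set.Ici ((N:ℝ)) := fun τ hτ => le_trans htN hτ.1
  have hsub0 : Set.Icc t (t + w) ⊆ Set.Ici (0:ℝ) := fun τ hτ => le_trans ht0 hτ.1
  have hlow : δ ≤ ν (Set.Icc t (t + w)) := by
    rw [happ _ measurableSet_Icc]
    have h1 : ∫⁻ τ in Set.Icc t (t+w), ENNReal.ofReal (ε^2/4) ∂(volume.restrict (Set.Ici (0:ℝ)))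
        ≤ ∫⁻ τ in Set.Icc t (t+w), F τ ∂(volume.restrict (Set.Ici (0:ℝ))) := by
      apply setLIntegral_mono' measurableSet_Icc
      intro τ hτ
      apply ENNReal.ofReal_le_ofReal
      have hτ0 : 0 ≤ τ := hsub0 hτ
      have h6 := hbump τ hτ
      have h7 : ε^2/4 ≤ (s τ)^2 := by nlinarith [h6, abs_nonneg (s τ), sq_abs (s τ)]
      simpa [hF, hsM, max_eq_left hτ0] using h7
    refine le_trans ?_ h1
    rw [setLIntegral_const, Measure.restrict_apply measurableSet_Icc,
      Set.inter_eq_left.mpr hsub0, Real.volume_Icc]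
    rw [hδ, show t + w - t = w by ring]
  have hup : ν (Set.Icc t (t + w)) ≤ ν (Set.Ici ((N:ℝ))) := measure_mono hsub1
  exact absurd (lt_of_le_of_lt (hlow.trans hup) hN) (lt_irrefl δ)

end AuxLemmas

/-- elastic adaptation law for nonlinearly parameterized dynamics
under the monotonicity assumption. -/
theorem elastic_adaptation_nonlinear
    {n p : ℕ}
    (x xd : ℝ → EuclideanSpace ℝ (Fin n))
    (s : ℝ → ℝ)
    (f : EuclideanSpace ℝ (Fin n) → EuclideanSpace ℝ (Fin p) → ℝ → ℝ)
    (α : EuclideanSpace ℝ (Fin n) → ℝ → EuclideanSpace ℝ (Fin p))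
    (a : EuclideanSpace ℝ (Fin p))
    (ahat abar : ℝ → EuclideanSpace ℝ (Fin p))
    (P : EuclideanSpace ℝ (Fin p) →L[ℝ] EuclideanSpace ℝ (Fin p))
    (η k D₁ : ℝ)
    (hη : 0 < η) (hk : 0 < k) (hD₁ : 0 < D₁)
    -- P is symmetric positive definite
    (hPsym : ∀ v w : EuclideanSpace ℝ (Fin p), ⟪P v, w⟫ = ⟪v, P w⟫)
    (hPpos : ∀ v : EuclideanSpace ℝ (Fin p), v ≠ 0 → 0 < ⟪v, P v⟫)
    -- monotonicity assumption
    (hmono₁ : ∀ (b : EuclideanSpace ℝ (Fin p)) (ξ : EuclideanSpace ℝ (Fin n)) (t : ℝ),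
      0 ≤ t → 0 ≤ ⟪b - a, α ξ t⟫ * (f ξ b t - f ξ a t))
    (hmono₂ : ∀ (b : EuclideanSpace ℝ (Fin p)) (ξ : EuclideanSpace ℝ (Fin n)) (t : ℝ),
      0 ≤ t → (1 / D₁) * |f ξ b t - f ξ a t| ≤ |⟪α ξ t, b - a⟫|)
    -- error dynamics ṡ = -η s + f̃
    (hs : ∀ t, 0 ≤ t →
      HasDerivAt s (-η * s t + (f (x t) (ahat t) t - f (x t) a t)) t)
    -- elastic adaptation law
    (ha : ∀ t, 0 ≤ t →
      HasDerivAt ahat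
        (-(P ((f (x t) (ahat t) t - f (x t) a t) • α (x t) t)) +
          k • (abar t - ahat t)) t)
    (hb : ∀ t, 0 ≤ t → HasDerivAt abar (k • (ahat t - abar t)) t)
    -- f̃ is locally bounded in (x, â) uniformly in t
    (hfloc : ∀ R : ℝ, ∃ M : ℝ,
      ∀ (ξ : EuclideanSpace ℝ (Fin n)) (b : EuclideanSpace ℝ (Fin p)) (t : ℝ),
        0 ≤ t → ‖ξ‖ ≤ R → ‖b‖ ≤ R → |f ξ b t - f ξ a t| ≤ M)
    -- boundedness of s implies boundedness of x
    (hsx : InLinf s → InLinf x)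
    -- s → 0 implies x → x_d
    (hxd : Tendsto s atTop (nhds 0) →
      Tendsto (fun t => x t - xd t) atTop (nhds 0)) :
    InLinf x ∧ InLinf ahat ∧ InLinf abar ∧
    (InL2 (fun t => f (x t) (ahat t) t - f (x t) a t) ∧
      InLinf (fun t => f (x t) (ahat t) t - f (x t) a t)) ∧
    InL2 (fun t => ahat t - abar t) ∧
    (InLinf s ∧ InL2 s) ∧
    Tendsto s atTop (nhds 0) ∧
    Tendsto (fun t => x t - xd t) atTop (nhds 0) := by
  obtain ⟨Q, hQP, hPQ, hQsym, c, hc, hcoer⟩ := exists_inv P hPsym hPpos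
  set ft : ℝ → ℝ := fun t => f (x t) (ahat t) t - f (x t) a t with hft
  set V : ℝ → ℝ := fun t =>
    ⟪ahat t - a, Q (ahat t - a)⟫ + ⟪abar t - a, Q (abar t - a)⟫ with hV
  set W : ℝ → ℝ := fun t =>
    2 * (ft t * ⟪ahat t - a, α (x t) t⟫) +
    2 * (k * ⟪ahat t - abar t, Q (ahat t - abar t)⟫) with hW
  have hQnn : ∀ v : EuclideanSpace ℝ (Fin p), 0 ≤ ⟪v, Q v⟫ := fun v =>
    le_trans (by positivity) (hcoer v)
  -- derivative of the Lyapunov function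
  have hPQ' : ∀ v w : EuclideanSpace ℝ (Fin p), ⟪P v, Q w⟫ = ⟪v, w⟫ := by
    intro v w; rw [hPsym, hPQ]
  have halg : ∀ (A B aa : EuclideanSpace ℝ (Fin p)) (F : ℝ),
      (⟪A, Q (-(P (F • aa)) + k • (B - A))⟫ + ⟪-(P (F • aa)) + k • (B - A), Q A⟫)
      + (⟪B, Q (k • (A - B))⟫ + ⟪k • (A - B), Q B⟫)
      = -(2 * (F * ⟪A, aa⟫) + 2 * (k * ⟪A - B, Q (A - B)⟫)) := by
    intro A B aa F
    have hBA : ⟪B, Q A⟫ = ⟪A, Q B⟫ := by rw [← hQsym, real_inner_comm]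
    have haaA : ⟪aa, A⟫ = ⟪A, aa⟫ := real_inner_comm _ _
    simp only [map_add, map_neg, _root_.map_smul, map_sub, hQP,
      inner_add_left, inner_add_right, inner_neg_left, inner_neg_right,
      real_inner_smul_left, real_inner_smul_right, inner_sub_left, inner_sub_right,
      hPQ', hBA, haaA]
    ring
  have hVd : ∀ t, 0 ≤ t → HasDerivAt V (-W t) t := by
    intro t ht
    have h1 : HasDerivAt (fun τ => ahat τ - a)
        (-(P (ft t • α (x t) t)) + k • (abar t - ahat t)) t := (ha t ht).sub_const a
    have h2 : HasDerivAt (fun τ => Q (ahat τ - a))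
        (Q (-(P (ft t • α (x t) t)) + k • (abar t - ahat t))) t :=
      Q.hasFDerivAt.comp_hasDerivAt t h1
    have h3 := h1.inner ℝ h2
    have h4 : HasDerivAt (fun τ => abar τ - a) (k • (ahat t - abar t)) t :=
      (hb t ht).sub_const a
    have h5 : HasDerivAt (fun τ => Q (abar τ - a)) (Q (k • (ahat t - abar t))) t :=
      Q.hasFDerivAt.comp_hasDerivAt t h4
    have h6 := h4.inner ℝ h5
    have h7 := h3.add h6
    refine h7.congr_deriv ?_; symm
    have hab1 : abar t - ahat t = (abar t - a) - (ahat t - a) := by abel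
    have hab2 : ahat t - abar t = (ahat t - a) - (abar t - a) := by abel
    simp only [hW]
    rw [hab1, hab2]
    exact (halg (ahat t - a) (abar t - a) (α (x t) t) (ft t)).symm
  -- lower bounds on W
  have hterm1 : ∀ t, 0 ≤ t → ft t ^ 2 ≤ D₁ * (ft t * ⟪ahat t - a, α (x t) t⟫) := by
    intro t ht
    have h1 := hmono₁ (ahat t) (x t) t ht
    have h2 := hmono₂ (ahat t) (x t) t ht
    have hc2 : |⟪α (x t) t, ahat t - a⟫| = |⟪ahat t - a, α (x t) t⟫| := by
      rw [real_inner_comm]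
    rw [hc2] at h2
    have h3 : ft t * ⟪ahat t - a, α (x t) t⟫ = |ft t| * |⟪ahat t - a, α (x t) t⟫| := by
      rw [← abs_mul, abs_of_nonneg (by rw [mul_comm]; exact h1)]
    have h2' := mul_le_mul_of_nonneg_left h2 hD₁.le
    have h2'' : |ft t| ≤ D₁ * |⟪ahat t - a, α (x t) t⟫| := by
      have he : D₁ * (1/D₁ * |ft t|) = |ft t| := by field_simp
      linarith [h2', he.le, he.ge]
    calc ft t ^ 2 = |ft t| * |ft t| := by rw [pow_two, ← abs_mul_abs_self]
      _ ≤ (D₁ * |⟪ahat t - a, α (x t) t⟫|) * |ft t| :=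
          mul_le_mul_of_nonneg_right h2'' (abs_nonneg _)
      _ = D₁ * (|ft t| * |⟪ahat t - a, α (x t) t⟫|) := by ring
      _ = D₁ * (ft t * ⟪ahat t - a, α (x t) t⟫) := by rw [h3]
  have hWlb1 : ∀ t, 0 ≤ t → 2 * ft t ^ 2 ≤ D₁ * W t := by
    intro t ht
    have h1 := hterm1 t ht
    have h2 : 0 ≤ k * ⟪ahat t - abar t, Q (ahat t - abar t)⟫ :=
      mul_nonneg hk.le (hQnn _)
    have hgoal : D₁ * W t = D₁ * (2 * (ft t * ⟪ahat t - a, α (x t) t⟫)) +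
        D₁ * (2 * (k * ⟪ahat t - abar t, Q (ahat t - abar t)⟫)) := by
      show D₁ * (2 * (ft t * ⟪ahat t - a, α (x t) t⟫) +
        2 * (k * ⟪ahat t - abar t, Q (ahat t - abar t)⟫)) = _
      ring
    rw [hgoal]
    linarith [h1, mul_nonneg hD₁.le h2]
  have hWlb2 : ∀ t, 0 ≤ t → 2*k*c * ‖ahat t - abar t‖^2 ≤ W t := by
    intro t ht
    have h1 := hterm1 t ht
    have h2 := hcoer (ahat t - abar t)
    have h4 : 0 ≤ ft t * ⟪ahat t - a, α (x t) t⟫ := by nlinarith [h1, sq_nonneg (ft t), hD₁]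
    show 2*k*c * ‖ahat t - abar t‖^2 ≤ 2 * (ft t * ⟪ahat t - a, α (x t) t⟫) +
      2 * (k * ⟪ahat t - abar t, Q (ahat t - abar t)⟫)
    linarith [mul_le_mul_of_nonneg_left h2 hk.le, h4]
  have hWnn : ∀ t, 0 ≤ t → 0 ≤ W t := by
    intro t ht
    nlinarith [hWlb1 t ht, sq_nonneg (ft t), hD₁]
  have hVnn : ∀ t, 0 ≤ V t := fun t => add_nonneg (hQnn _) (hQnn _)
  -- V is nonincreasing
  have hVcont : ContinuousOn V (Set.Ici 0) := fun τ hτ =>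
    (hVd τ hτ).continuousAt.continuousWithinAt
  have hVanti : AntitoneOn V (Set.Ici 0) := by
    apply antitoneOn_of_deriv_nonpos (convex_Ici 0) hVcont
    · intro τ hτ
      rw [interior_Ici] at hτ
      exact (hVd τ (le_of_lt hτ)).differentiableAt.differentiableWithinAt
    · intro τ hτ
      rw [interior_Ici] at hτ
      rw [(hVd τ (le_of_lt hτ)).deriv]
      exact neg_nonpos.mpr (hWnn τ (le_of_lt hτ))
  have hVmono : ∀ t, 0 ≤ t → V t ≤ V 0 :=
    fun t ht => hVanti (Set.self_mem_Ici) ht ht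
  -- bounds on parameters
  have hparam : ∀ (u : ℝ → EuclideanSpace ℝ (Fin p)) (t : ℝ), 0 ≤ t →
      ⟪u t - a, Q (u t - a)⟫ ≤ V t → ‖u t‖ ≤ Real.sqrt (V 0 / c) + ‖a‖ := by
    intro u t ht hle
    have h1 : c * ‖u t - a‖^2 ≤ V 0 := le_trans (hcoer _) (le_trans hle (hVmono t ht))
    have h2 : ‖u t - a‖^2 ≤ V 0 / c := by
      rw [le_div_iff₀ hc]; linarith [h1]
    have h3 : ‖u t - a‖ ≤ Real.sqrt (V 0 / c) := by
      rw [← Real.sqrt_sq (norm_nonneg (u t - a))]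
      exact Real.sqrt_le_sqrt h2
    calc ‖u t‖ = ‖(u t - a) + a‖ := by rw [sub_add_cancel]
      _ ≤ ‖u t - a‖ + ‖a‖ := norm_add_le _ _
      _ ≤ Real.sqrt (V 0 / c) + ‖a‖ := by linarith [h3]
  have hahat : ∀ t, 0 ≤ t → ‖ahat t‖ ≤ Real.sqrt (V 0 / c) + ‖a‖ := fun t ht =>
    hparam ahat t ht (by rw [hV]; simp only; linarith [hQnn (abar t - a)])
  have habar : ∀ t, 0 ≤ t → ‖abar t‖ ≤ Real.sqrt (V 0 / c) + ‖a‖ := fun t ht =>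
    hparam abar t ht (by rw [hV]; simp only; linarith [hQnn (ahat t - a)])
  -- FTC for W over (0, n)
  have hWFTC : ∀ nn : ℕ, IntegrableOn W (Set.Ioo (0:ℝ) nn) ∧
      (∫ t in Set.Ioo (0:ℝ) nn, W t) ≤ V 0 := by
    intro nn
    have h0n : (0:ℝ) ≤ (nn:ℝ) := Nat.cast_nonneg nn
    have hcont : ContinuousOn (fun τ => -V τ) (Set.Icc (0:ℝ) nn) := fun τ hτ =>
      ((hVd τ hτ.1).neg.continuousAt.continuousWithinAt)
    have hder : ∀ τ ∈ Set.Ioo (0:ℝ) (nn:ℝ), HasDerivAt (fun τ => -V τ) (W τ) τ :=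
      fun τ hτ => by exact (hVd τ hτ.1.le).neg.congr_deriv (neg_neg _)
    have hpos : ∀ τ ∈ Set.Ioo (0:ℝ) (nn:ℝ), 0 ≤ W τ := fun τ hτ => hWnn τ hτ.1.le
    have hint : IntegrableOn W (Set.Ioc (0:ℝ) nn) :=
      intervalIntegral.integrableOn_deriv_of_nonneg hcont hder hpos
    have hii : IntervalIntegrable W volume 0 nn :=
      (intervalIntegrable_iff_integrableOn_Ioc_of_le h0n).mpr hint
    have hder2 : ∀ τ ∈ Set.uIcc (0:ℝ) (nn:ℝ), HasDerivAt (fun τ => -V τ) (W τ) τ := by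
      intro τ hτ
      rw [Set.uIcc_of_le h0n] at hτ
      exact (hVd τ hτ.1).neg.congr_deriv (neg_neg _)
    have hftc : ∫ τ in (0:ℝ)..(nn:ℝ), W τ = (fun τ => -V τ) nn - (fun τ => -V τ) 0 :=
      intervalIntegral.integral_eq_sub_of_hasDerivAt hder2 hii
    simp only at hftc
    constructor
    · exact hint.mono_set Set.Ioo_subset_Ioc_self
    · rw [← integral_Ioc_eq_integral_Ioo, ← intervalIntegral.integral_of_le h0n, hftc]
      have := hVnn nn
      linarith
  -- L² bound for f̃
  have hftL2' : ∫⁻ t in Set.Ici (0:ℝ), ENNReal.ofReal (ft t ^ 2)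
      ≤ ENNReal.ofReal (D₁/2 * V 0) := by
    apply lint_Ici_le
    intro nn
    apply lint_le_of_le_integrable (by positivity : (0:ℝ) ≤ D₁/2) measurableSet_Ioo
      (hWFTC nn).1 ?_ (fun t ht => hWnn t ht.1.le) (hWFTC nn).2
    intro t ht
    have h1 := hWlb1 t ht.1.le
    calc ft t ^ 2 = (2 * ft t ^ 2)/2 := by ring
      _ ≤ (D₁ * W t)/2 := by gcongr
      _ = D₁/2 * W t := by ring
  -- L² bound for ahat - abar
  have hdvL2' : ∫⁻ t in Set.Ici (0:ℝ), ENNReal.ofReal (‖ahat t - abar t‖ ^ 2)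
      ≤ ENNReal.ofReal (1/(2*k*c) * V 0) := by
    apply lint_Ici_le
    intro nn
    apply lint_le_of_le_integrable (by positivity : (0:ℝ) ≤ 1/(2*k*c)) measurableSet_Ioo
      (hWFTC nn).1 ?_ (fun t ht => hWnn t ht.1.le) (hWFTC nn).2
    intro t ht
    show ‖ahat t - abar t‖ ^ 2 ≤ 1/(2*k*c) * W t
    have h1 := hWlb2 t ht.1.le
    have hkc : (0:ℝ) < 2*k*c := by positivity
    rw [one_div, inv_mul_eq_div, le_div_iff₀ hkc]
    linarith [h1]
  -- continuity of s on [0,∞) and measurable surrogates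
  have hscont : ContinuousOn s (Set.Ici 0) := fun τ hτ =>
    (hs τ hτ).continuousAt.continuousWithinAt
  set sM : ℝ → ℝ := fun t => s (max t 0) with hsMdef
  have hsMc : Continuous sM := by
    apply hscont.comp_continuous (continuous_id.max continuous_const)
    intro t; exact Set.mem_Ici.mpr (le_max_right t 0)
  have hsMeq : ∀ t : ℝ, 0 ≤ t → sM t = s t := fun t ht => by
    simp only [hsMdef]; rw [max_eq_left ht]
  set CF : ℝ := D₁/2 * V 0 with hCFdef
  have hCFnn : 0 ≤ CF := mul_nonneg (by positivity) (hVnn 0)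
  set Gf : ℝ → ℝ := fun t => deriv s t + η * sM t with hGfdef
  have hGfm : Measurable Gf := (measurable_deriv s).add ((hsMc.measurable).const_mul η)
  have hGfeq : ∀ t, 0 ≤ t → ft t = Gf t := by
    intro t ht
    have hd := (hs t ht).deriv
    simp only [hGfdef]
    rw [hd, hsMeq t ht]
    ring
  have hftae : ∀ T : ℝ, ft =ᵐ[volume.restrict (Set.Ioc (0:ℝ) T)] Gf := by
    intro T
    filter_upwards [ae_restrict_mem measurableSet_Ioc] with t ht using hGfeq t ht.1.le
  have hftaesm : ∀ T : ℝ, AEStronglyMeasurable ft (volume.restrict (Set.Ioc (0:ℝ) T)) :=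
    fun T => (hGfm.aestronglyMeasurable).congr (hftae T).symm
  have hftsq_lint : ∀ T : ℝ, ∫⁻ t in Set.Ioc (0:ℝ) T, ENNReal.ofReal (ft t ^ 2)
      ≤ ENNReal.ofReal CF := fun T =>
    le_trans (lintegral_mono_set (fun t ht => ht.1.le)) hftL2'
  have hftsq_int : ∀ T : ℝ, IntegrableOn (fun t => ft t ^ 2) (Set.Ioc (0:ℝ) T) := by
    intro T
    constructor
    · have heq : (fun t => ft t ^ 2) = fun t => ft t * ft t := funext fun t => by ring
      rw [heq]
      exact (hftaesm T).mul (hftaesm T)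
    · rw [hasFiniteIntegral_iff_ofReal (ae_of_all _ fun t => sq_nonneg (ft t))]
      exact lt_of_le_of_lt (hftsq_lint T) ENNReal.ofReal_lt_top
  have hftsq_val : ∀ T : ℝ, ∫ t in Set.Ioc (0:ℝ) T, ft t ^ 2 ≤ CF := by
    intro T
    rw [integral_eq_lintegral_of_nonneg_ae (ae_of_all _ fun t => sq_nonneg (ft t))
      (hftsq_int T).1]
    refine le_trans (ENNReal.toReal_mono ENNReal.ofReal_ne_top (hftsq_lint T)) ?_
    rw [ENNReal.toReal_ofReal hCFnn]
  have hft_int : ∀ T : ℝ, IntegrableOn ft (Set.Ioc (0:ℝ) T) := by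
    intro T
    refine ⟨hftaesm T, ?_⟩
    rw [hasFiniteIntegral_iff_norm]
    calc ∫⁻ t in Set.Ioc (0:ℝ) T, ENNReal.ofReal ‖ft t‖
        ≤ ∫⁻ t in Set.Ioc (0:ℝ) T, (1 + ENNReal.ofReal (ft t ^ 2)) := by
          apply lintegral_mono
          intro t
          have h1 : ‖ft t‖ ≤ 1 + ft t ^ 2 := by
            rw [Real.norm_eq_abs]
            nlinarith [abs_nonneg (ft t), sq_abs (ft t)]
          refine le_trans (ENNReal.ofReal_le_ofReal h1) ?_
          rw [ENNReal.ofReal_add zero_le_one (sq_nonneg _)]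
          simp
      _ = volume (Set.Ioc (0:ℝ) T) + ∫⁻ t in Set.Ioc (0:ℝ) T, ENNReal.ofReal (ft t ^ 2) := by
          rw [lintegral_add_left measurable_const]
          simp
      _ < ⊤ := ENNReal.add_lt_top.mpr ⟨by rw [Real.volume_Ioc]; exact ENNReal.ofReal_lt_top,
          lt_of_le_of_lt (hftsq_lint T) ENNReal.ofReal_lt_top⟩
  -- the key energy estimate for s
  have hkey : ∀ T : ℝ, 0 ≤ T →
      s T ^ 2 + η * ∫ t in Set.Ioc (0:ℝ) T, s t ^ 2 ≤ s 0 ^ 2 + CF/η := by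
    intro T hT
    have hIccIci : Set.Icc (0:ℝ) T ⊆ Set.Ici 0 := fun τ hτ => hτ.1
    have hcontIcc : ContinuousOn s (Set.Icc 0 T) := hscont.mono hIccIci
    have hs2cont : ContinuousOn (fun t => s t ^ 2) (Set.Icc (0:ℝ) T) := hcontIcc.pow 2
    have hs2int : IntegrableOn (fun t => s t ^ 2) (Set.Ioc (0:ℝ) T) :=
      (hs2cont.integrableOn_compact isCompact_Icc).mono_set Set.Ioc_subset_Icc_self
    obtain ⟨Bs, hBs⟩ := isCompact_Icc.exists_bound_of_continuousOn hcontIcc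
    have hdh : ∀ τ ∈ Set.uIcc (0:ℝ) T, HasDerivAt (fun τ => s τ ^ 2)
        (2 * s τ * (-η * s τ + ft τ)) τ := by
      intro τ hτ
      rw [Set.uIcc_of_le hT] at hτ
      have h9 := (hs τ hτ.1).pow 2
      refine h9.congr_deriv ?_; symm
      push_cast
      ring
    have hint2 : IntegrableOn (fun t => 2 * s t * ft t) (Set.Ioc (0:ℝ) T) := by
      apply Integrable.bdd_mul (c := 2 * Bs) (hft_int T)
      · apply (((continuous_const.mul hsMc : Continuous fun t => (2:ℝ) * sM t)).aestronglyMeasurable (μ := volume.restrict (Set.Ioc 0 T))).congr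
        filter_upwards [ae_restrict_mem measurableSet_Ioc] with t ht
        show (2:ℝ) * sM t = 2 * s t
        rw [hsMeq t ht.1.le]
      · filter_upwards [ae_restrict_mem measurableSet_Ioc] with t ht
        have h9 := hBs t (Set.Ioc_subset_Icc_self ht)
        rw [Real.norm_eq_abs] at h9 ⊢
        rw [abs_mul]
        calc |(2:ℝ)| * |s t| = 2 * |s t| := by norm_num
          _ ≤ 2 * Bs := by linarith [h9]
    have hint1 : IntegrableOn (fun t => 2 * s t * (-η * s t)) (Set.Ioc (0:ℝ) T) := by
      have hcc : ContinuousOn (fun t => 2 * s t * (-η * s t)) (Set.Icc (0:ℝ) T) :=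
        (continuousOn_const.mul hcontIcc).mul (continuousOn_const.mul hcontIcc)
      exact (hcc.integrableOn_compact isCompact_Icc).mono_set Set.Ioc_subset_Icc_self
    have hinth : IntegrableOn (fun t => 2 * s t * (-η * s t + ft t)) (Set.Ioc (0:ℝ) T) := by
      have heq : (fun t => 2 * s t * (-η * s t + ft t))
          = fun t => 2 * s t * (-η * s t) + 2 * s t * ft t := funext fun t => by ring
      rw [heq]
      exact hint1.add hint2
    have hii : IntervalIntegrable (fun t => 2 * s t * (-η * s t + ft t)) volume 0 T :=
      (intervalIntegrable_iff_integrableOn_Ioc_of_le hT).mpr hinth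
    have hftc : ∫ τ in (0:ℝ)..T, 2 * s τ * (-η * s τ + ft τ)
        = (fun τ => s τ ^ 2) T - (fun τ => s τ ^ 2) 0 :=
      intervalIntegral.integral_eq_sub_of_hasDerivAt hdh hii
    simp only at hftc
    have hrhs_int : IntegrableOn (fun τ => ft τ ^ 2/η - η * s τ ^ 2) (Set.Ioc (0:ℝ) T) :=
      ((hftsq_int T).div_const η).sub (hs2int.const_mul η)
    have hmono_int : ∫ τ in Set.Ioc (0:ℝ) T, 2 * s τ * (-η * s τ + ft τ)
        ≤ ∫ τ in Set.Ioc (0:ℝ) T, (ft τ ^ 2/η - η * s τ ^ 2) := by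
      apply setIntegral_mono_on hinth hrhs_int measurableSet_Ioc
      intro τ hτ
      have h9 : ft τ ^ 2/η - η * s τ ^ 2 - 2 * s τ * (-η * s τ + ft τ)
          = (ft τ - η * s τ)^2/η := by field_simp; ring
      have h10 := div_nonneg (sq_nonneg (ft τ - η * s τ)) hη.le
      linarith [h9.ge, h9.le, h10]
    have hsplit : ∫ τ in Set.Ioc (0:ℝ) T, (ft τ ^ 2/η - η * s τ ^ 2)
        = (∫ τ in Set.Ioc (0:ℝ) T, ft τ ^ 2)/η - η * ∫ τ in Set.Ioc (0:ℝ) T, s τ ^ 2 := by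
      rw [integral_sub ((hftsq_int T).div_const η) (hs2int.const_mul η),
        integral_div, integral_const_mul]
    have h10 : s T ^ 2 - s 0 ^ 2 ≤ CF/η - η * ∫ τ in Set.Ioc (0:ℝ) T, s τ ^ 2 := by
      rw [← hftc, intervalIntegral.integral_of_le hT]
      refine le_trans hmono_int ?_
      rw [hsplit]
      have h11 := hftsq_val T
      have h12 : (∫ τ in Set.Ioc (0:ℝ) T, ft τ ^ 2)/η ≤ CF/η := by gcongr
      linarith [h12]
    linarith [h10]
  have hCs : ∀ t, 0 ≤ t → |s t| ≤ Real.sqrt (s 0 ^ 2 + CF/η) := by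
    intro t ht
    have h1 := hkey t ht
    have h2 : 0 ≤ ∫ τ in Set.Ioc (0:ℝ) t, s τ ^ 2 :=
      setIntegral_nonneg measurableSet_Ioc fun τ _ => sq_nonneg _
    have h3 : s t ^ 2 ≤ s 0 ^ 2 + CF/η := by nlinarith [mul_nonneg hη.le h2]
    calc |s t| = Real.sqrt (s t ^ 2) := (Real.sqrt_sq_eq_abs _).symm
      _ ≤ Real.sqrt (s 0 ^ 2 + CF/η) := Real.sqrt_le_sqrt h3
  have hsinf : InLinf s := ⟨Real.sqrt (s 0 ^ 2 + CF/η), fun t ht => by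
    rw [Real.norm_eq_abs]; exact hCs t ht⟩
  -- L² of s
  have hsL2' : ∫⁻ t in Set.Ici (0:ℝ), ENNReal.ofReal (s t ^ 2)
      ≤ ENNReal.ofReal ((s 0 ^ 2 + CF/η)/η) := by
    apply lint_Ici_le
    intro nn
    have h0n : (0:ℝ) ≤ (nn:ℝ) := Nat.cast_nonneg nn
    have hs2int : IntegrableOn (fun t => s t ^ 2) (Set.Ioo (0:ℝ) nn) :=
      (((hscont.mono (fun τ hτ => hτ.1)).pow 2).integrableOn_compact
        (isCompact_Icc (a := (0:ℝ)) (b := (nn:ℝ)))).mono_set Set.Ioo_subset_Icc_self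
    rw [← ofReal_integral_eq_lintegral_ofReal hs2int (ae_of_all _ fun t => sq_nonneg _)]
    apply ENNReal.ofReal_le_ofReal
    have h1 := hkey nn h0n
    have h2 : ∫ t in Set.Ioo (0:ℝ) nn, s t ^ 2 = ∫ t in Set.Ioc (0:ℝ) nn, s t ^ 2 :=
      (integral_Ioc_eq_integral_Ioo).symm
    rw [h2, le_div_iff₀ hη]
    nlinarith [sq_nonneg (s nn)]
  -- boundedness of x and of f̃
  have hxinf : InLinf x := hsx hsinf
  obtain ⟨Cx, hCx⟩ := hxinf
  obtain ⟨M, hM⟩ := hfloc (max Cx (Real.sqrt (V 0 / c) + ‖a‖))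
  have hftbd : ∀ t, 0 ≤ t → |ft t| ≤ M := fun t ht =>
    hM (x t) (ahat t) t ht ((hCx t ht).trans (le_max_left _ _))
      ((hahat t ht).trans (le_max_right _ _))
  have hM0 : 0 ≤ M := le_trans (abs_nonneg _) (hftbd 0 le_rfl)
  have hCs0 : 0 ≤ Real.sqrt (s 0 ^ 2 + CF/η) := Real.sqrt_nonneg _
  -- s is Lipschitz on [0,∞)
  set L : ℝ := η * Real.sqrt (s 0 ^ 2 + CF/η) + M + 1 with hLdef
  have hL : 0 < L := by
    have := mul_nonneg hη.le hCs0
    rw [hLdef]; linarith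
  have hlip : ∀ t u : ℝ, 0 ≤ t → 0 ≤ u → |s u - s t| ≤ L * |u - t| := by
    intro t u ht hu
    have hbound : ∀ τ ∈ Set.Ici (0:ℝ), ‖-η * s τ + ft τ‖ ≤ L := by
      intro τ hτ
      rw [Real.norm_eq_abs]
      have h1 : |(-η) * s τ| = η * |s τ| := by
        rw [abs_mul, abs_neg, abs_of_pos hη]
      have h2 := hCs τ hτ
      have h3 := hftbd τ hτ
      calc |(-η) * s τ + ft τ| ≤ |(-η) * s τ| + |ft τ| := abs_add_le _ _
        _ = η * |s τ| + |ft τ| := by rw [h1]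
        _ ≤ η * Real.sqrt (s 0 ^ 2 + CF/η) + M := by
            have := mul_le_mul_of_nonneg_left h2 hη.le
            linarith
        _ ≤ L := by rw [hLdef]; linarith
    have h4 := (convex_Ici (0:ℝ)).norm_image_sub_le_of_norm_hasDerivWithin_le
      (fun τ (hτ : τ ∈ Set.Ici (0:ℝ)) => ((hs τ hτ).hasDerivWithinAt)) hbound ht hu
    simpa [Real.norm_eq_abs] using h4
  have hs0 : Tendsto s atTop (nhds 0) :=
    barbalat hL hscont hlip (lt_of_le_of_lt hsL2' ENNReal.ofReal_lt_top)
  -- assemble everything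
  refine ⟨⟨Cx, hCx⟩, ⟨_, hahat⟩, ⟨_, habar⟩, ⟨?_, ⟨M, fun t ht => by
    rw [Real.norm_eq_abs]; exact hftbd t ht⟩⟩, ?_, ⟨hsinf, ?_⟩, hs0, hxd hs0⟩
  · show (∫⁻ t in Set.Ici (0:ℝ), ENNReal.ofReal (‖ft t‖ ^ 2)) < ⊤
    simp only [Real.norm_eq_abs, sq_abs]
    exact lt_of_le_of_lt hftL2' ENNReal.ofReal_lt_top
  · show (∫⁻ t in Set.Ici (0:ℝ), ENNReal.ofReal (‖ahat t - abar t‖ ^ 2)) < ⊤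
    exact lt_of_le_of_lt hdvL2' ENNReal.ofReal_lt_top
  · show (∫⁻ t in Set.Ici (0:ℝ), ENNReal.ofReal (‖s t‖ ^ 2)) < ⊤
    simp only [Real.norm_eq_abs, sq_abs]
    exact lt_of_le_of_lt hsL2' ENNReal.ofReal_lt_top
end
end
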